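/- arXiv:1008.3126 — 4 statements merged into one kernel-verified Lean document; each statement's English description precedes it below -/
import Mathlib

section
/- For V ∈ M_d(C), k ∈ {1,…,d}, and λ ≥ 0, the map φ_λ(x) = Tr(x)·1 − λ V x V* on M_d(C) is k-positive if and only if λ ‖V‖_{(k)}² ≤ 1, where ‖V‖_{(k)}² is the sum of the k largest eigenvalues of V V*. -/
open scoped Matrix ComplexOrder

/-- A map `φ : M_ι(ℂ) → M_ι(ℂ)` is `k`-positive if `φ ⊗ id_{M_k(ℂ)}` maps positive
semidefinite matrices to positive semidefinite matrices. -/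
def kPositive {ι : Type} [Fintype ι] [DecidableEq ι] (k : ℕ)
    (φ : Matrix ι ι ℂ → Matrix ι ι ℂ) : Prop :=
  ∀ X : Matrix (ι × Fin k) (ι × Fin k) ℂ, X.PosSemidef →
    Matrix.PosSemidef (Matrix.of fun p q : ι × Fin k =>
      φ (Matrix.of fun i j : ι => X (i, p.2) (j, q.2)) p.1 q.1)

namespace KyFanAux

open Complex Matrix

/-- squared Frobenius norm -/
noncomputable def F2 {m n : Type} [Fintype m] [Fintype n] (A : Matrix m n ℂ) : ℝ :=
  ∑ p, ∑ q, Complex.normSq (A p q)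

lemma F2_nonneg {m n : Type} [Fintype m] [Fintype n] (A : Matrix m n ℂ) : 0 ≤ F2 A := by
  refine Finset.sum_nonneg fun p _ => Finset.sum_nonneg fun q _ => Complex.normSq_nonneg _

lemma F2_conjTranspose {m n : Type} [Fintype m] [Fintype n] (A : Matrix m n ℂ) :
    F2 Aᴴ = F2 A := by
  rw [F2, F2, Finset.sum_comm]
  simp [Matrix.conjTranspose_apply]

lemma trace_conjTranspose_mul {m n : Type} [Fintype m] [Fintype n] (A : Matrix m n ℂ) :
    (Aᴴ * A).trace = (F2 A : ℂ) := by
  rw [Matrix.trace, F2]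
  push_cast
  rw [Finset.sum_comm]
  refine Finset.sum_congr rfl fun p _ => ?_
  rw [Matrix.diag_apply, Matrix.mul_apply]
  refine Finset.sum_congr rfl fun q _ => ?_
  rw [Matrix.conjTranspose_apply, Complex.normSq_eq_conj_mul_self]
  rfl

lemma cauchy_schwarz {m n : Type} [Fintype m] [Fintype n] (A B : Matrix m n ℂ) :
    Complex.normSq ((Aᴴ * B).trace) ≤ F2 A * F2 B := by
  classical
  let f : EuclideanSpace ℂ (m × n) := WithLp.toLp 2 (fun p : m × n => A p.1 p.2)
  let g : EuclideanSpace ℂ (m × n) := WithLp.toLp 2 (fun p : m × n => B p.1 p.2)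
  have htr : (Aᴴ * B).trace = inner (𝕜 := ℂ) f g := by
    rw [Matrix.trace]
    simp only [PiLp.inner_apply, RCLike.inner_apply, f, g]
    conv_rhs => enter [2, x]; rw [mul_comm]
    rw [show (∑ x : m × n, (starRingEnd ℂ) (A x.1 x.2) * B x.1 x.2)
        = ∑ p : m, ∑ q : n, (starRingEnd ℂ) (A p q) * B p q from Fintype.sum_prod_type (fun x : m × n => (starRingEnd ℂ) (A x.1 x.2) * B x.1 x.2),
      Finset.sum_comm]
    refine Finset.sum_congr rfl fun q _ => ?_
    rw [Matrix.diag_apply, Matrix.mul_apply]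
    refine Finset.sum_congr rfl fun p _ => ?_
    rw [Matrix.conjTranspose_apply]
    rfl
  have hcs : ‖inner (𝕜 := ℂ) f g‖ ≤ ‖f‖ * ‖g‖ := norm_inner_le_norm f g
  have h2 : ‖inner (𝕜 := ℂ) f g‖ ^ 2 ≤ (‖f‖ * ‖g‖) ^ 2 := by
    exact pow_le_pow_left₀ (norm_nonneg _) hcs 2
  have hf : ‖f‖ ^ 2 = F2 A := by
    rw [EuclideanSpace.norm_eq, Real.sq_sqrt (Finset.sum_nonneg fun i _ => sq_nonneg _)]
    rw [F2, show (∑ p : m, ∑ q : n, normSq (A p q)) = ∑ x : m × n, normSq (A x.1 x.2)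
      from (Fintype.sum_prod_type (fun x : m × n => normSq (A x.1 x.2))).symm]
    refine Finset.sum_congr rfl fun p _ => ?_
    rw [← Complex.sq_norm]
  have hg : ‖g‖ ^ 2 = F2 B := by
    rw [EuclideanSpace.norm_eq, Real.sq_sqrt (Finset.sum_nonneg fun i _ => sq_nonneg _)]
    rw [F2, show (∑ p : m, ∑ q : n, normSq (B p q)) = ∑ x : m × n, normSq (B x.1 x.2)
      from (Fintype.sum_prod_type (fun x : m × n => normSq (B x.1 x.2))).symm]
    refine Finset.sum_congr rfl fun p _ => ?_
    rw [← Complex.sq_norm]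
  calc Complex.normSq ((Aᴴ * B).trace) = ‖inner (𝕜 := ℂ) f g‖ ^ 2 := by
        rw [htr, ← Complex.sq_norm]
    _ ≤ (‖f‖ * ‖g‖) ^ 2 := h2
    _ = F2 A * F2 B := by rw [mul_pow, hf, hg]


lemma filter_lt_eq_map {d k : ℕ} (hkd : k ≤ d) :
    Finset.univ.filter (fun i : Fin d => (i : ℕ) < k)
      = (Finset.univ : Finset (Fin k)).map ⟨Fin.castLE hkd, Fin.castLE_injective hkd⟩ := by
  ext i
  simp only [Finset.mem_filter, Finset.mem_univ, true_and, Finset.mem_map,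
    Function.Embedding.coeFn_mk]
  constructor
  · intro h; exact ⟨⟨(i : ℕ), h⟩, by ext; simp⟩
  · rintro ⟨a, rfl⟩; simpa using a.2

lemma card_filter_lt {d k : ℕ} (hkd : k ≤ d) :
    (Finset.univ.filter (fun i : Fin d => (i : ℕ) < k)).card = k := by
  rw [filter_lt_eq_map hkd, Finset.card_map, Finset.card_univ, Fintype.card_fin]

lemma sum_filter_lt_eq {d k : ℕ} (hkd : k ≤ d) (σ : Fin d → ℝ) :
    ∑ i ∈ Finset.univ.filter (fun i : Fin d => (i : ℕ) < k), σ i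
      = ∑ a : Fin k, σ (Fin.castLE hkd a) := by
  rw [filter_lt_eq_map hkd, Finset.sum_map]
  rfl

/-- discrete Ky Fan / rearrangement bound -/
lemma sum_mul_le_topk {d k : ℕ} (hk1 : 1 ≤ k) (hkd : k ≤ d)
    (σ : Fin d → ℝ) (hσ : Antitone σ) (hσ0 : ∀ i, 0 ≤ σ i)
    (t : Fin d → ℝ) (ht0 : ∀ i, 0 ≤ t i) (ht1 : ∀ i, t i ≤ 1)
    (hts : ∑ i, t i ≤ k) :
    ∑ i, σ i * t i ≤ ∑ i ∈ Finset.univ.filter (fun i : Fin d => (i : ℕ) < k), σ i := by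
  classical
  set F := Finset.univ.filter (fun i : Fin d => (i : ℕ) < k) with hF
  have hkd' : k - 1 < d := lt_of_lt_of_le (Nat.sub_lt hk1 one_pos) hkd
  set c : ℝ := σ ⟨k - 1, hkd'⟩ with hc
  have hc0 : 0 ≤ c := hσ0 _
  have hsplit := Finset.sum_filter_add_sum_filter_not Finset.univ
    (fun i : Fin d => (i : ℕ) < k) (fun i => σ i * t i)
  have h1 : ∑ i ∈ F, σ i * t i ≤ ∑ i ∈ F, (σ i + c * (t i - 1)) := by
    refine Finset.sum_le_sum fun i hi => ?_
    have hik : (i : ℕ) < k := (Finset.mem_filter.mp hi).2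
    have hci : c ≤ σ i := hσ (by
      show i ≤ (⟨k - 1, hkd'⟩ : Fin d)
      simp only [Fin.le_def]
      omega)
    nlinarith [ht1 i, ht0 i]
  have h2 : ∑ i ∈ Finset.univ.filter (fun i : Fin d => ¬ (i : ℕ) < k), σ i * t i
      ≤ ∑ i ∈ Finset.univ.filter (fun i : Fin d => ¬ (i : ℕ) < k), c * t i := by
    refine Finset.sum_le_sum fun i hi => ?_
    have hik : ¬ (i : ℕ) < k := (Finset.mem_filter.mp hi).2
    have hci : σ i ≤ c := hσ (by
      show (⟨k - 1, hkd'⟩ : Fin d) ≤ i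
      simp only [Fin.le_def]
      omega)
    exact mul_le_mul_of_nonneg_right hci (ht0 i)
  have hcard : (F.card : ℝ) = k := by rw [hF, card_filter_lt hkd]
  have hiden : ∑ i ∈ F, (σ i + c * (t i - 1))
      = ∑ i ∈ F, σ i + c * (∑ i ∈ F, t i - k) := by
    rw [Finset.sum_add_distrib, ← Finset.mul_sum, Finset.sum_sub_distrib]
    simp [hcard]
  have hden2 : ∑ i ∈ Finset.univ.filter (fun i : Fin d => ¬ (i : ℕ) < k), c * t i
      = c * ∑ i ∈ Finset.univ.filter (fun i : Fin d => ¬ (i : ℕ) < k), t i := by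
    rw [Finset.mul_sum]
  have htsplit := Finset.sum_filter_add_sum_filter_not Finset.univ
    (fun i : Fin d => (i : ℕ) < k) t
  calc ∑ i, σ i * t i
      = ∑ i ∈ F, σ i * t i + ∑ i ∈ Finset.univ.filter (fun i : Fin d => ¬ (i : ℕ) < k),
        σ i * t i := hsplit.symm
    _ ≤ (∑ i ∈ F, σ i + c * (∑ i ∈ F, t i - k))
        + c * ∑ i ∈ Finset.univ.filter (fun i : Fin d => ¬ (i : ℕ) < k), t i := by
        rw [← hiden, ← hden2]; exact add_le_add h1 h2
    _ = ∑ i ∈ F, σ i + c * (∑ i, t i - k) := by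
        rw [← htsplit]; ring
    _ ≤ ∑ i ∈ F, σ i := by nlinarith


lemma diag_nonneg' {n : Type} [Fintype n] [DecidableEq n] {M : Matrix n n ℂ}
    (hM : M.PosSemidef) (i : n) : 0 ≤ M i i := by
  simpa [dotProduct, Pi.single_apply, apply_ite] using hM.dotProduct_mulVec_nonneg (Pi.single i 1)

lemma eq_re_of_nonneg {z : ℂ} (hz : 0 ≤ z) : z = (z.re : ℂ) := by
  have him := (Complex.le_def.mp hz).2
  apply Complex.ext <;> simp [← him]

lemma trace_mul_H_le {d k : ℕ} (hk1 : 1 ≤ k) (hkd : k ≤ d) (V : Matrix (Fin d) (Fin d) ℂ)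
    (σ : Fin d → ℝ) (hσ : Antitone σ)
    (e : Equiv.Perm (Fin d))
    (he : ∀ i, σ i = (Matrix.isHermitian_mul_conjTranspose_self V).eigenvalues (e i))
    (Q : Matrix (Fin d) (Fin d) ℂ) (hQ : Q.PosSemidef) (hQ1 : (1 - Q).PosSemidef)
    (hTrQ : Q.trace.re ≤ k) :
    ((Q * (V * Vᴴ)).trace).re
      ≤ ∑ i ∈ Finset.univ.filter (fun i : Fin d => (i : ℕ) < k), σ i := by
  classical
  set hH := Matrix.isHermitian_mul_conjTranspose_self V with hHdef
  set μ : Fin d → ℝ := hH.eigenvalues with hμ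
  set U : Matrix (Fin d) (Fin d) ℂ := (hH.eigenvectorUnitary : Matrix (Fin d) (Fin d) ℂ)
    with hU
  have hU1 : star U * U = 1 := Unitary.coe_star_mul_self hH.eigenvectorUnitary
  have hU2 : U * star U = 1 := Unitary.coe_mul_star_self hH.eigenvectorUnitary
  set R : Matrix (Fin d) (Fin d) ℂ := Uᴴ * Q * U with hR
  have hstar : star U = Uᴴ := rfl
  have hRpsd : R.PosSemidef := hQ.conjTranspose_mul_mul_same U
  have hR1psd : (1 - R).PosSemidef := by
    have : Uᴴ * (1 - Q) * U = 1 - R := by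
      rw [Matrix.mul_sub, Matrix.sub_mul, mul_one, hR, ← hstar, hU1]
    rw [← this]
    exact hQ1.conjTranspose_mul_mul_same U
  set t : Fin d → ℝ := fun i => (R i i).re with ht
  have hRdiag : ∀ i, R i i = (t i : ℂ) := fun i => eq_re_of_nonneg (diag_nonneg' hRpsd i)
  have ht0 : ∀ i, 0 ≤ t i := fun i => (Complex.le_def.mp (diag_nonneg' hRpsd i)).1
  have ht1 : ∀ i, t i ≤ 1 := by
    intro i
    have := (Complex.le_def.mp (diag_nonneg' hR1psd i)).1
    simp only [Matrix.sub_apply, Matrix.one_apply_eq, Complex.sub_re, Complex.one_re,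
      Complex.zero_re] at this
    show (R i i).re ≤ 1
    linarith
  have htrR : R.trace = Q.trace := by
    rw [hR, Matrix.trace_mul_cycle, ← hstar, hU2, one_mul]
  have hts : ∑ i, t i ≤ k := by
    have : ∑ i, t i = R.trace.re := by
      rw [Matrix.trace, Complex.re_sum]
      rfl
    rw [this, htrR]; exact hTrQ
  have hμ0 : ∀ i, 0 ≤ μ i := fun i =>
    (Matrix.posSemidef_self_mul_conjTranspose V).eigenvalues_nonneg i
  -- trace formula
  have htr : (Q * (V * Vᴴ)).trace = ∑ i, (t i * μ i : ℝ) := by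
    conv_lhs => rw [show V * Vᴴ = U * Matrix.diagonal (RCLike.ofReal ∘ μ) * star U from
      hH.spectral_theorem]
    rw [show Q * (U * Matrix.diagonal (RCLike.ofReal ∘ μ) * star U)
        = (Q * U * Matrix.diagonal (RCLike.ofReal ∘ μ)) * star U by
      simp only [Matrix.mul_assoc],
      Matrix.trace_mul_comm, hstar, show Uᴴ * (Q * U * Matrix.diagonal (RCLike.ofReal ∘ μ))
        = R * Matrix.diagonal (RCLike.ofReal ∘ μ) by simp only [hR, Matrix.mul_assoc]]
    rw [Matrix.trace]
    push_cast
    refine Finset.sum_congr rfl fun i _ => ?_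
    rw [Matrix.diag_apply, Matrix.mul_diagonal, hRdiag i]
    simp [mul_comm]
  have hre : ((Q * (V * Vᴴ)).trace).re = ∑ i, t i * μ i := by
    rw [htr, Complex.ofReal_re]
  rw [hre]
  have hreidx : ∑ i, t i * μ i = ∑ j, σ j * t (e j) := by
    rw [← Equiv.sum_comp e (fun i => t i * μ i)]
    refine Finset.sum_congr rfl fun j _ => ?_
    rw [he j, hμ]; ring
  rw [hreidx]
  refine sum_mul_le_topk hk1 hkd σ hσ (fun i => by rw [he i]; exact hμ0 _)
    (fun j => t (e j)) (fun j => ht0 _) (fun j => ht1 _) ?_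
  rw [Equiv.sum_comp e t]
  exact hts


lemma exists_projection {d k : ℕ} (N : Matrix (Fin d) (Fin k) ℂ) :
    ∃ P : Matrix (Fin d) (Fin d) ℂ, P.PosSemidef ∧ (1 - P).PosSemidef ∧
      Pᴴ = P ∧ P * P = P ∧ P * N = N ∧ P.trace.re ≤ k := by
  classical
  set K : Matrix (Fin d) (Fin d) ℂ := N * Nᴴ with hKdef
  have hKpsd : K.PosSemidef := Matrix.posSemidef_self_mul_conjTranspose N
  set hKH : K.IsHermitian := hKpsd.isHermitian with hKHdef
  set ν : Fin d → ℝ := hKH.eigenvalues with hν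
  set W : Matrix (Fin d) (Fin d) ℂ := (hKH.eigenvectorUnitary : Matrix (Fin d) (Fin d) ℂ)
    with hW
  have hW1 : star W * W = 1 := Unitary.coe_star_mul_self hKH.eigenvectorUnitary
  have hW2 : W * star W = 1 := Unitary.coe_mul_star_self hKH.eigenvectorUnitary
  have hstar : star W = Wᴴ := rfl
  set χ : Fin d → ℝ := fun i => if ν i = 0 then 0 else 1 with hχ
  set Dχ : Matrix (Fin d) (Fin d) ℂ := Matrix.diagonal (fun i => (χ i : ℂ)) with hDχ
  set P : Matrix (Fin d) (Fin d) ℂ := W * Dχ * Wᴴ with hP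
  have hχ01 : ∀ i, 0 ≤ χ i ∧ χ i ≤ 1 := by
    intro i; rw [hχ]; dsimp only; split <;> norm_num
  have hPpsd : P.PosSemidef := by
    refine (Matrix.posSemidef_diagonal_iff.mpr fun i => ?_).mul_mul_conjTranspose_same W
    exact Complex.zero_le_real.mpr (hχ01 i).1
  have h1P : 1 - P = W * Matrix.diagonal (fun i => ((1 - χ i : ℝ) : ℂ)) * Wᴴ := by
    have : Matrix.diagonal (fun i => ((1 - χ i : ℝ) : ℂ)) = 1 - Dχ := by
      ext i j
      by_cases h : i = j
      · subst h
        simp only [Matrix.diagonal_apply_eq, Matrix.sub_apply, Matrix.one_apply_eq, hDχ]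
        push_cast; ring
      · simp [hDχ, Matrix.diagonal_apply_ne _ h, Matrix.one_apply_ne h, Matrix.sub_apply]
    rw [this, Matrix.mul_sub, Matrix.sub_mul, mul_one, ← hstar, hW2, hstar]
  have h1Ppsd : (1 - P).PosSemidef := by
    rw [h1P]
    refine (Matrix.posSemidef_diagonal_iff.mpr fun i => ?_).mul_mul_conjTranspose_same W
    exact Complex.zero_le_real.mpr (by linarith [(hχ01 i).2])
  have hPH : Pᴴ = P := hPpsd.isHermitian
  have hDχ2 : Dχ * Dχ = Dχ := by
    rw [hDχ, Matrix.diagonal_mul_diagonal]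
    refine congrArg Matrix.diagonal ?_
    funext i
    rcases eq_or_ne (ν i) 0 with h | h <;> simp [hχ, h]
  have hP2 : P * P = P := by
    rw [hP]
    calc W * Dχ * Wᴴ * (W * Dχ * Wᴴ) = W * (Dχ * (Wᴴ * W) * Dχ) * Wᴴ := by
          simp only [Matrix.mul_assoc]
      _ = W * Dχ * Wᴴ := by rw [← hstar, hW1, mul_one, hDχ2]
  have hPK : P * K = K := by
    have hKspec : K = W * Matrix.diagonal (RCLike.ofReal ∘ ν) * Wᴴ := hKH.spectral_theorem
    have hDD : Dχ * Matrix.diagonal (RCLike.ofReal ∘ ν) = Matrix.diagonal (RCLike.ofReal ∘ ν) := by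
      rw [hDχ, Matrix.diagonal_mul_diagonal]
      refine congrArg Matrix.diagonal ?_
      funext i
      rcases eq_or_ne (ν i) 0 with h | h <;> simp [hχ, h, Function.comp]
    calc P * K = W * (Dχ * (Wᴴ * W) * Matrix.diagonal (RCLike.ofReal ∘ ν)) * Wᴴ := by
          rw [hP, hKspec]; simp only [Matrix.mul_assoc]
      _ = W * Matrix.diagonal (RCLike.ofReal ∘ ν) * Wᴴ := by
          rw [← hstar, hW1, mul_one, hDD]
      _ = K := hKspec.symm
  have hPN : P * N = N := by
    have hB : ((1 - P) * N) * ((1 - P) * N)ᴴ = 0 := by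
      rw [Matrix.conjTranspose_mul, ← Matrix.mul_assoc,
        show (1 - P) * N * Nᴴ = (1 - P) * K by rw [hKdef, Matrix.mul_assoc],
        Matrix.sub_mul, one_mul, hPK, sub_self, Matrix.zero_mul]
    have hB0 : (1 - P) * N = 0 := by
      have := Matrix.conjTranspose_mul_self_eq_zero (A := ((1 - P) * N)ᴴ)
      rw [Matrix.conjTranspose_conjTranspose] at this
      have h0 : ((1 - P) * N)ᴴ = 0 := this.mp hB
      calc (1 - P) * N = (((1 - P) * N)ᴴ)ᴴ := (Matrix.conjTranspose_conjTranspose _).symm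
        _ = 0 := by rw [h0, Matrix.conjTranspose_zero]
    have hsub : P * N - N = 0 := by
      calc P * N - N = -((1 - P) * N) := by
            rw [Matrix.sub_mul, Matrix.one_mul]; abel
        _ = 0 := by rw [hB0, neg_zero]
    exact sub_eq_zero.mp hsub
  have hTrP : P.trace.re ≤ k := by
    have htr : P.trace = Dχ.trace := by
      rw [hP, Matrix.trace_mul_cycle, ← hstar, hW1, one_mul]
    have htrD : Dχ.trace = ((∑ i, χ i : ℝ) : ℂ) := by
      rw [hDχ, Matrix.trace_diagonal]; push_cast; rfl
    rw [htr, htrD, Complex.ofReal_re]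
    have hcard : ∑ i, χ i = ((Finset.univ.filter (fun i => ν i ≠ 0)).card : ℝ) := by
      rw [hχ, Finset.card_filter]
      push_cast
      refine Finset.sum_congr rfl fun i _ => ?_
      split <;> simp_all
    rw [hcard]
    have hrank : (Finset.univ.filter (fun i => ν i ≠ 0)).card = K.rank := by
      rw [hKH.rank_eq_card_non_zero_eigs, Fintype.card_subtype]
    have hrk : K.rank ≤ k := by
      rw [hKdef, Matrix.rank_self_mul_conjTranspose]
      exact (Matrix.rank_le_card_width N).trans (by simp)
    exact_mod_cast hrank ▸ (Nat.cast_le.mpr hrk)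
  exact ⟨P, hPpsd, h1Ppsd, hPH, hP2, hPN, hTrP⟩


lemma F2_eq_trace_re {m n : Type} [Fintype m] [Fintype n] (A : Matrix m n ℂ) :
    F2 A = ((Aᴴ * A).trace).re := by
  rw [trace_conjTranspose_mul, Complex.ofReal_re]

lemma scalar_ineq {d k : ℕ} (hk1 : 1 ≤ k) (hkd : k ≤ d) (V : Matrix (Fin d) (Fin d) ℂ)
    (σ : Fin d → ℝ) (hσ : Antitone σ) (e : Equiv.Perm (Fin d))
    (he : ∀ i, σ i = (Matrix.isHermitian_mul_conjTranspose_self V).eigenvalues (e i))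
    (lam : ℝ) (hlam : 0 ≤ lam)
    (hs : lam * ∑ i ∈ Finset.univ.filter (fun i : Fin d => (i : ℕ) < k), σ i ≤ 1)
    (M N : Matrix (Fin d) (Fin k) ℂ) :
    lam * Complex.normSq ((Mᴴ * Vᴴ * N).trace) ≤ F2 (M * Nᴴ) := by
  classical
  obtain ⟨P, hPpsd, h1Ppsd, hPH, hP2, hPN, hTrP⟩ := exists_projection N
  set C : Matrix (Fin d) (Fin d) ℂ := N * Mᴴ with hC
  have htr1 : (Mᴴ * Vᴴ * N).trace = ((P * V)ᴴ * C).trace := by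
    rw [Matrix.mul_assoc, Matrix.trace_mul_comm]
    rw [Matrix.conjTranspose_mul, hPH, hC]
    rw [show Vᴴ * P * (N * Mᴴ) = Vᴴ * (P * N) * Mᴴ by simp only [Matrix.mul_assoc]]
    rw [hPN, Matrix.mul_assoc]
  have hcs : Complex.normSq (((P * V)ᴴ * C).trace) ≤ F2 (P * V) * F2 C :=
    cauchy_schwarz (P * V) C
  have hPV : F2 (P * V) ≤ ∑ i ∈ Finset.univ.filter (fun i : Fin d => (i : ℕ) < k), σ i := by
    rw [F2_eq_trace_re]
    have : (P * V)ᴴ * (P * V) = Vᴴ * (P * V) := by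
      rw [Matrix.conjTranspose_mul, hPH,
        show Vᴴ * P * (P * V) = Vᴴ * (P * P) * V by simp only [Matrix.mul_assoc], hP2,
        Matrix.mul_assoc]
    rw [this, Matrix.trace_mul_comm, Matrix.mul_assoc]
    exact trace_mul_H_le hk1 hkd V σ hσ e he P hPpsd h1Ppsd hTrP
  have hFC : F2 C = F2 (M * Nᴴ) := by
    rw [hC, show N * Mᴴ = (M * Nᴴ)ᴴ by
      rw [Matrix.conjTranspose_mul, Matrix.conjTranspose_conjTranspose], F2_conjTranspose]
  calc lam * Complex.normSq ((Mᴴ * Vᴴ * N).trace)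
      ≤ lam * (F2 (P * V) * F2 C) := by
        rw [htr1]; exact mul_le_mul_of_nonneg_left hcs hlam
    _ ≤ lam * ((∑ i ∈ Finset.univ.filter (fun i : Fin d => (i : ℕ) < k), σ i) * F2 C) :=
        mul_le_mul_of_nonneg_left (mul_le_mul_of_nonneg_right hPV (F2_nonneg C)) hlam
    _ = (lam * ∑ i ∈ Finset.univ.filter (fun i : Fin d => (i : ℕ) < k), σ i) * F2 C := by
        ring
    _ ≤ 1 * F2 C := mul_le_mul_of_nonneg_right hs (F2_nonneg C)
    _ = F2 (M * Nᴴ) := by rw [one_mul, hFC]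


lemma sum3 {M : Type} [AddCommMonoid M] {α β γ : Type} [Fintype α] [Fintype β] [Fintype γ]
    (f : α → β → γ → M) :
    ∑ a, ∑ b, ∑ c, f a b c = ∑ c, ∑ a, ∑ b, f a b c := by
  trans ∑ a, ∑ c, ∑ b, f a b c
  · exact Finset.sum_congr rfl fun a _ => Finset.sum_comm
  · exact Finset.sum_comm

lemma sum4 {M : Type} [AddCommMonoid M] {α β γ δ : Type} [Fintype α] [Fintype β] [Fintype γ]
    [Fintype δ] (f : α → β → γ → δ → M) :
    ∑ a, ∑ b, ∑ c, ∑ e, f a b c e = ∑ e, ∑ a, ∑ b, ∑ c, f a b c e := by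
  trans ∑ a, ∑ e, ∑ b, ∑ c, f a b c e
  · exact Finset.sum_congr rfl fun a _ => sum3 _
  · exact Finset.sum_comm

lemma key {d k : ℕ} (V : Matrix (Fin d) (Fin d) ℂ) (lam : ℝ) (ψ η : Fin d × Fin k → ℂ) :
    dotProduct (star η) ((Matrix.of fun p q : Fin d × Fin k =>
        ((Matrix.of fun i j : Fin d =>
            ψ (i, p.2) * (starRingEnd ℂ) (ψ (j, q.2))).trace
            • (1 : Matrix (Fin d) (Fin d) ℂ)
          - (lam : ℂ) • (V * (Matrix.of fun i j : Fin d =>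
            ψ (i, p.2) * (starRingEnd ℂ) (ψ (j, q.2))) * Vᴴ)) p.1 q.1) *ᵥ η)
      = ((F2 ((Matrix.of fun i a => ψ (i, a)) * (Matrix.of fun i a => η (i, a))ᴴ) : ℝ) : ℂ)
        - (lam : ℂ) * (Complex.normSq (((Matrix.of fun i a => ψ (i, a))ᴴ * Vᴴ
            * (Matrix.of fun i a => η (i, a))).trace) : ℝ) := by
  classical
  set M : Matrix (Fin d) (Fin k) ℂ := Matrix.of fun i a => ψ (i, a) with hM
  set N : Matrix (Fin d) (Fin k) ℂ := Matrix.of fun i a => η (i, a) with hN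
  set cj := starRingEnd ℂ
  have cjcj : ∀ z : ℂ, cj (cj z) = z := fun z => Complex.conj_conj z
  -- step 1 : expand the quadratic form
  have step1 : dotProduct (star η) ((Matrix.of fun p q : Fin d × Fin k =>
        ((Matrix.of fun i j : Fin d => ψ (i, p.2) * cj (ψ (j, q.2))).trace
            • (1 : Matrix (Fin d) (Fin d) ℂ)
          - (lam : ℂ) • (V * (Matrix.of fun i j : Fin d =>
            ψ (i, p.2) * cj (ψ (j, q.2))) * Vᴴ)) p.1 q.1) *ᵥ η)
      = (∑ p : Fin d × Fin k, ∑ q : Fin d × Fin k,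
          (cj (η p) * ((∑ m, ψ (m, p.2) * cj (ψ (m, q.2)))
            * (if p.1 = q.1 then (1:ℂ) else 0))) * η q)
        - (lam : ℂ) * ∑ p : Fin d × Fin k, ∑ q : Fin d × Fin k,
          (cj (η p) * (∑ t, (∑ s, V p.1 s * (ψ (s, p.2) * cj (ψ (t, q.2))))
            * cj (V q.1 t))) * η q := by
    rw [dotProduct]
    simp only [Matrix.mulVec, dotProduct, Pi.star_apply, Matrix.of_apply,
      Matrix.sub_apply, Matrix.smul_apply, smul_eq_mul, Matrix.one_apply,
      Matrix.trace, Matrix.diag_apply, Matrix.mul_apply, Matrix.conjTranspose_apply]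
    simp only [Complex.star_def]
    rw [Finset.mul_sum, ← Finset.sum_sub_distrib]
    refine Finset.sum_congr rfl fun p _ => ?_
    rw [Finset.mul_sum, Finset.mul_sum, ← Finset.sum_sub_distrib]
    refine Finset.sum_congr rfl fun q _ => ?_
    ring
  rw [step1]
  have hwexp : (Mᴴ * Vᴴ * N).trace
      = ∑ a : Fin k, ∑ j : Fin d, (∑ s : Fin d, cj (ψ (s, a)) * cj (V j s)) * η (j, a) := by
    simp only [Matrix.trace, Matrix.diag_apply, Matrix.mul_apply, Matrix.conjTranspose_apply,
      hM, hN, Matrix.of_apply, Complex.star_def]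
    rfl
  have hT2 : (∑ p : Fin d × Fin k, ∑ q : Fin d × Fin k,
      (cj (η p) * (∑ t, (∑ s, V p.1 s * (ψ (s, p.2) * cj (ψ (t, q.2)))) * cj (V q.1 t))) * η q)
      = ((Complex.normSq ((Mᴴ * Vᴴ * N).trace) : ℝ) : ℂ) := by
    have hgfact : ∀ p q : Fin d × Fin k,
        (cj (η p) * (∑ t, (∑ s, V p.1 s * (ψ (s, p.2) * cj (ψ (t, q.2)))) * cj (V q.1 t))) * η q
        = (cj (η p) * (∑ s, V p.1 s * ψ (s, p.2)))
          * ((∑ t, cj (ψ (t, q.2)) * cj (V q.1 t)) * η q) := by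
      intro p q
      rw [show (∑ t, (∑ s, V p.1 s * (ψ (s, p.2) * cj (ψ (t, q.2)))) * cj (V q.1 t))
          = (∑ s, V p.1 s * ψ (s, p.2)) * (∑ t, cj (ψ (t, q.2)) * cj (V q.1 t)) from ?_]
      · ring
      · rw [Finset.mul_sum]
        refine Finset.sum_congr rfl fun t _ => ?_
        rw [Finset.sum_mul, Finset.sum_mul]
        exact Finset.sum_congr rfl fun s' _ => by ring
    simp only [hgfact]
    rw [← Fintype.sum_mul_sum]
    have h2 : (∑ q : Fin d × Fin k, (∑ t, cj (ψ (t, q.2)) * cj (V q.1 t)) * η q)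
        = (Mᴴ * Vᴴ * N).trace := by
      rw [hwexp, Fintype.sum_prod_type, Finset.sum_comm]
    have h1 : (∑ p : Fin d × Fin k, cj (η p) * (∑ s, V p.1 s * ψ (s, p.2)))
        = cj ((Mᴴ * Vᴴ * N).trace) := by
      rw [hwexp, map_sum, Fintype.sum_prod_type, Finset.sum_comm]
      refine Finset.sum_congr rfl fun a _ => ?_
      rw [map_sum]
      refine Finset.sum_congr rfl fun i _ => ?_
      rw [_root_.map_mul, map_sum]
      simp only [_root_.map_mul, cjcj]
      rw [show (∑ s, ψ (s, a) * V i s) = ∑ s, V i s * ψ (s, a) from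
        Finset.sum_congr rfl fun s _ => mul_comm _ _]
      ring
    rw [h1, h2, ← Complex.normSq_eq_conj_mul_self]
  have hT1 : (∑ p : Fin d × Fin k, ∑ q : Fin d × Fin k,
      (cj (η p) * ((∑ m, ψ (m, p.2) * cj (ψ (m, q.2)))
        * (if p.1 = q.1 then (1:ℂ) else 0))) * η q)
      = ((F2 (M * Nᴴ) : ℝ) : ℂ) := by
    trans ∑ i : Fin d, ∑ a : Fin k, ∑ b : Fin k,
        (cj (η (i, a)) * (∑ m, ψ (m, a) * cj (ψ (m, b)))) * η (i, b)
    · rw [Fintype.sum_prod_type]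
      refine Finset.sum_congr rfl fun i _ => ?_
      refine Finset.sum_congr rfl fun a _ => ?_
      rw [Fintype.sum_prod_type, Finset.sum_comm]
      refine Finset.sum_congr rfl fun b _ => ?_
      simp only [mul_ite, mul_one, mul_zero, ite_mul, zero_mul, Finset.sum_ite_eq,
        Finset.mem_univ, if_true]
    trans ∑ m : Fin d, ∑ i : Fin d, ∑ a : Fin k, ∑ b : Fin k,
        (cj (η (i, a)) * (ψ (m, a) * cj (ψ (m, b)))) * η (i, b)
    · refine Eq.trans (Finset.sum_congr rfl fun i _ => Finset.sum_congr rfl fun a _ =>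
        Finset.sum_congr rfl fun b _ => ?_) (sum4 _)
      rw [Finset.mul_sum, Finset.sum_mul]
    have hF : ((F2 (M * Nᴴ) : ℝ) : ℂ)
        = ∑ m : Fin d, ∑ i : Fin d,
          (∑ a, cj (ψ (m, a)) * η (i, a)) * (∑ b, ψ (m, b) * cj (η (i, b))) := by
      rw [F2]
      push_cast
      refine Finset.sum_congr rfl fun m _ => Finset.sum_congr rfl fun i _ => ?_
      rw [Complex.normSq_eq_conj_mul_self]
      have e1 : cj ((M * Nᴴ) m i) = ∑ a, cj (ψ (m, a)) * η (i, a) := by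
        rw [Matrix.mul_apply, map_sum]
        refine Finset.sum_congr rfl fun a _ => ?_
        rw [Matrix.conjTranspose_apply, _root_.map_mul]
        simp [hM, hN, cjcj, Complex.star_def]
      have e2 : ((M * Nᴴ) m i) = ∑ b, ψ (m, b) * cj (η (i, b)) := by
        rw [Matrix.mul_apply]
        refine Finset.sum_congr rfl fun b _ => ?_
        rw [Matrix.conjTranspose_apply]
        simp [hM, hN, Complex.star_def]
        exact Or.inl rfl
      rw [e1, e2]
    rw [hF]
    refine Finset.sum_congr rfl fun m _ => Finset.sum_congr rfl fun i _ => ?_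
    rw [Fintype.sum_mul_sum, Finset.sum_comm]
    refine Finset.sum_congr rfl fun a _ => Finset.sum_congr rfl fun b _ => by ring
  rw [hT1, hT2]


lemma Y_isHermitian {d k : ℕ} (V : Matrix (Fin d) (Fin d) ℂ) (lam : ℝ)
    (X : Matrix (Fin d × Fin k) (Fin d × Fin k) ℂ) (hX : X.IsHermitian) :
    (Matrix.of fun p q : Fin d × Fin k =>
      ((Matrix.of fun i j : Fin d => X (i, p.2) (j, q.2)).trace
          • (1 : Matrix (Fin d) (Fin d) ℂ)
        - (lam : ℂ) • (V * (Matrix.of fun i j : Fin d => X (i, p.2) (j, q.2)) * Vᴴ))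
        p.1 q.1).IsHermitian := by
  rw [Matrix.IsHermitian]
  ext p q
  rw [Matrix.conjTranspose_apply]
  simp only [Matrix.of_apply, Matrix.sub_apply, Matrix.smul_apply, smul_eq_mul,
    Matrix.one_apply, Matrix.trace, Matrix.diag_apply, Matrix.mul_apply,
    Matrix.conjTranspose_apply]
  have h2 : star (if q.1 = p.1 then (1:ℂ) else 0) = if p.1 = q.1 then (1:ℂ) else 0 := by
    rcases eq_or_ne p.1 q.1 with h | h
    · rw [if_pos h.symm, if_pos h, star_one]
    · rw [if_neg fun hh => h hh.symm, if_neg h, star_zero]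
  have h3 : star ((lam : ℂ)) = (lam : ℂ) := by
    rw [Complex.star_def, Complex.conj_ofReal]
  have h4 : star (∑ t, (∑ s, V q.1 s * X (s, q.2) (t, p.2)) * star (V p.1 t))
      = ∑ t, (∑ s, V p.1 s * X (s, p.2) (t, q.2)) * star (V q.1 t) := by
    rw [star_sum]
    simp only [star_mul', star_star, star_sum]
    simp only [hX.apply]
    simp only [Finset.sum_mul]
    rw [Finset.sum_comm]
    refine Finset.sum_congr rfl fun a _ => Finset.sum_congr rfl fun b _ => ?_
    ring
  rw [star_sub]
  congr 1
  · rw [star_mul', star_sum, h2]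
    exact congrArg (· * _) (Finset.sum_congr rfl fun m _ => hX.apply _ _)
  · rw [star_mul', h3, h4]

lemma QF_sum {d k : ℕ} (V : Matrix (Fin d) (Fin d) ℂ) (lam : ℝ)
    (B : Matrix (Fin d × Fin k) (Fin d × Fin k) ℂ) (x : Fin d × Fin k → ℂ) :
    dotProduct (star x) ((Matrix.of fun p q : Fin d × Fin k =>
      ((Matrix.of fun i j : Fin d => (Bᴴ * B) (i, p.2) (j, q.2)).trace
          • (1 : Matrix (Fin d) (Fin d) ℂ)
        - (lam : ℂ) • (V * (Matrix.of fun i j : Fin d => (Bᴴ * B) (i, p.2) (j, q.2)) * Vᴴ))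
        p.1 q.1) *ᵥ x)
    = ∑ r : Fin d × Fin k,
        (((F2 ((Matrix.of fun i a => (starRingEnd ℂ) (B r (i, a)))
            * (Matrix.of fun i a => x (i, a))ᴴ) : ℝ) : ℂ)
          - (lam : ℂ) * (Complex.normSq (((Matrix.of fun i a => (starRingEnd ℂ) (B r (i, a)))ᴴ
              * Vᴴ * (Matrix.of fun i a => x (i, a))).trace) : ℝ)) := by
  classical
  set cj := starRingEnd ℂ
  have cjcj : ∀ z : ℂ, cj (cj z) = z := fun z => Complex.conj_conj z
  set Y : (Fin d × Fin k) → Matrix (Fin d × Fin k) (Fin d × Fin k) ℂ := fun r =>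
    Matrix.of fun p q : Fin d × Fin k =>
      ((Matrix.of fun i j : Fin d => cj (B r (i, p.2)) * cj (cj (B r (j, q.2)))).trace
          • (1 : Matrix (Fin d) (Fin d) ℂ)
        - (lam : ℂ) • (V * (Matrix.of fun i j : Fin d =>
            cj (B r (i, p.2)) * cj (cj (B r (j, q.2)))) * Vᴴ)) p.1 q.1 with hY
  have hYsum : (Matrix.of fun p q : Fin d × Fin k =>
      ((Matrix.of fun i j : Fin d => (Bᴴ * B) (i, p.2) (j, q.2)).trace
          • (1 : Matrix (Fin d) (Fin d) ℂ)
        - (lam : ℂ) • (V * (Matrix.of fun i j : Fin d => (Bᴴ * B) (i, p.2) (j, q.2)) * Vᴴ))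
        p.1 q.1) = ∑ r, Y r := by
    ext p q
    rw [Matrix.sum_apply]
    have hblk : (Matrix.of fun i j : Fin d => (Bᴴ * B) (i, p.2) (j, q.2))
        = ∑ r, Matrix.of fun i j : Fin d => cj (B r (i, p.2)) * cj (cj (B r (j, q.2))) := by
      ext i j
      rw [Matrix.sum_apply]
      simp only [Matrix.of_apply, Matrix.mul_apply, Matrix.conjTranspose_apply,
        Complex.star_def, cjcj]
      rfl
    rw [Matrix.of_apply, hblk]
    rw [Matrix.trace_sum, Matrix.mul_sum, Matrix.sum_mul, Finset.sum_smul, Finset.smul_sum,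
      ← Finset.sum_sub_distrib, Matrix.sum_apply]
    exact Finset.sum_congr rfl fun r _ => rfl
  rw [hYsum]
  have hsplit : dotProduct (star x) ((∑ r, Y r) *ᵥ x)
      = ∑ r, dotProduct (star x) (Y r *ᵥ x) := by
    simp only [dotProduct, Matrix.mulVec, Matrix.sum_apply, Finset.sum_mul,
      Finset.mul_sum]
    exact sum3 fun p q r => star x p * (Y r p q * x q)
  rw [hsplit]
  refine Finset.sum_congr rfl fun r _ => ?_
  exact key V lam (fun u => cj (B r u)) x


lemma extremal {d k : ℕ} (hk1 : 1 ≤ k) (hkd : k ≤ d) (V : Matrix (Fin d) (Fin d) ℂ)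
    (σ : Fin d → ℝ) (e : Equiv.Perm (Fin d))
    (he : ∀ i, σ i = (Matrix.isHermitian_mul_conjTranspose_self V).eigenvalues (e i)) :
    ∃ M N : Matrix (Fin d) (Fin k) ℂ,
      (Mᴴ * Vᴴ * N).trace
        = ((∑ i ∈ Finset.univ.filter (fun i : Fin d => (i : ℕ) < k), σ i : ℝ) : ℂ)
      ∧ F2 (M * Nᴴ) = ∑ i ∈ Finset.univ.filter (fun i : Fin d => (i : ℕ) < k), σ i := by
  classical
  set hH := Matrix.isHermitian_mul_conjTranspose_self V with hHdef
  set μ : Fin d → ℝ := hH.eigenvalues with hμ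
  set U : Matrix (Fin d) (Fin d) ℂ := (hH.eigenvectorUnitary : Matrix (Fin d) (Fin d) ℂ)
    with hU
  have hU1 : star U * U = 1 := Unitary.coe_star_mul_self hH.eigenvectorUnitary
  have hstar : star U = Uᴴ := rfl
  set ι : Fin k → Fin d := fun a => e (Fin.castLE hkd a) with hι
  have hιinj : Function.Injective ι := e.injective.comp (Fin.castLE_injective hkd)
  set N : Matrix (Fin d) (Fin k) ℂ := U.submatrix id ι with hN
  set M : Matrix (Fin d) (Fin k) ℂ := Vᴴ * N with hM
  have hNH : Nᴴ = Uᴴ.submatrix ι id := by rw [hN, Matrix.conjTranspose_submatrix]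
  have hmul1 : ∀ C : Matrix (Fin d) (Fin d) ℂ,
      Uᴴ.submatrix ι id * C = (Uᴴ * C).submatrix ι id := by
    intro C
    rw [Matrix.submatrix_mul Uᴴ C ι id id Function.bijective_id, Matrix.submatrix_id_id]
  have hmul2 : ∀ C : Matrix (Fin d) (Fin d) ℂ,
      C.submatrix ι id * N = (C * U).submatrix ι ι := by
    intro C
    rw [hN, Matrix.submatrix_mul C U ι id ι Function.bijective_id]
  have hNN : Nᴴ * N = 1 := by
    rw [hNH, hmul2, ← hstar, hU1]
    ext a b
    rw [Matrix.submatrix_apply, Matrix.one_apply, Matrix.one_apply]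
    simp [hιinj.eq_iff]
  have hcore : Nᴴ * (V * Vᴴ) * N
      = (Matrix.diagonal (RCLike.ofReal ∘ μ)).submatrix ι ι := by
    rw [hNH, hmul1, hmul2]
    congr 1
    rw [← hstar]
    simpa using hH.conjStarAlgAut_star_eigenvectorUnitary
  have htrace : (Nᴴ * (V * Vᴴ) * N).trace
      = ((∑ i ∈ Finset.univ.filter (fun i : Fin d => (i : ℕ) < k), σ i : ℝ) : ℂ) := by
    rw [hcore, Matrix.trace, sum_filter_lt_eq hkd σ]
    push_cast
    refine Finset.sum_congr rfl fun a _ => ?_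
    rw [Matrix.diag_apply, Matrix.submatrix_apply, Matrix.diagonal_apply_eq]
    simp only [Function.comp_apply, hι]
    rw [he]
    rfl
  have hMH : Mᴴ * Vᴴ * N = Nᴴ * (V * Vᴴ) * N := by
    rw [hM, Matrix.conjTranspose_mul, Matrix.conjTranspose_conjTranspose]
    simp only [Matrix.mul_assoc]
  have hMM : Mᴴ * M = Nᴴ * (V * Vᴴ) * N := by
    rw [hM, Matrix.conjTranspose_mul, Matrix.conjTranspose_conjTranspose]
    simp only [Matrix.mul_assoc]
  refine ⟨M, N, ?_, ?_⟩
  · rw [hMH, htrace]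
  · rw [F2_eq_trace_re]
    have h1 : (M * Nᴴ)ᴴ * (M * Nᴴ) = N * (Mᴴ * M * Nᴴ) := by
      rw [Matrix.conjTranspose_mul, Matrix.conjTranspose_conjTranspose]
      simp only [Matrix.mul_assoc]
    rw [h1, Matrix.trace_mul_comm,
      show Mᴴ * M * Nᴴ * N = Mᴴ * M * (Nᴴ * N) from by simp only [Matrix.mul_assoc],
      hNN, Matrix.mul_one, hMM, htrace, Complex.ofReal_re]

end KyFanAux

/-- `φ_λ(x) = Tr(x)·1 − λ V x V*` is `k`-positive iff `λ‖V‖_{(k)}² ≤ 1`, where `‖V‖_{(k)}²`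
is the sum of the `k` largest eigenvalues of `V V*`, expressed via an antitone enumeration
`σ` of those eigenvalues. -/
theorem kPositive_iff_kyFan {d : ℕ} (V : Matrix (Fin d) (Fin d) ℂ) (k : ℕ)
    (hk1 : 1 ≤ k) (hkd : k ≤ d) (lam : ℝ) (hlam : 0 ≤ lam)
    (σ : Fin d → ℝ) (hσ : Antitone σ)
    (hperm : ∃ e : Equiv.Perm (Fin d),
      ∀ i, σ i = (Matrix.isHermitian_mul_conjTranspose_self V).eigenvalues (e i)) :
    kPositive k (fun x => x.trace • (1 : Matrix (Fin d) (Fin d) ℂ) - (lam : ℂ) • (V * x * Vᴴ))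
      ↔ lam * ∑ i ∈ Finset.univ.filter (fun i : Fin d => (i : ℕ) < k), σ i ≤ 1 := by
  classical
  obtain ⟨e, he⟩ := hperm
  set s : ℝ := ∑ i ∈ Finset.univ.filter (fun i : Fin d => (i : ℕ) < k), σ i with hsdef
  have hσ0 : ∀ i, 0 ≤ σ i := fun i => by
    rw [he i]
    exact (Matrix.posSemidef_self_mul_conjTranspose V).eigenvalues_nonneg _
  have hs0 : 0 ≤ s := Finset.sum_nonneg fun i _ => hσ0 i
  constructor
  · -- k-positivity implies the Ky Fan bound
    intro h
    obtain ⟨M, N, hMtr, hMF2⟩ := KyFanAux.extremal hk1 hkd V σ e he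
    set ψ : Fin d × Fin k → ℂ := fun p => M p.1 p.2 with hψ
    set η : Fin d × Fin k → ℂ := fun p => N p.1 p.2 with hη
    set X : Matrix (Fin d × Fin k) (Fin d × Fin k) ℂ :=
      Matrix.of fun p q => ψ p * (starRingEnd ℂ) (ψ q) with hX
    have hd0 : 0 < d := lt_of_lt_of_le hk1 hkd
    have hk0 : 0 < k := hk1
    set r0 : Fin d × Fin k := (⟨0, hd0⟩, ⟨0, hk0⟩) with hr0
    set C : Matrix (Fin d × Fin k) (Fin d × Fin k) ℂ :=
      Matrix.of fun r p => if r = r0 then (starRingEnd ℂ) (ψ p) else 0 with hC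
    have hXC : X = Cᴴ * C := by
      ext p q
      rw [hX, Matrix.of_apply, Matrix.mul_apply]
      simp only [Matrix.conjTranspose_apply, hC, Matrix.of_apply, Complex.star_def]
      rw [Finset.sum_eq_single r0]
      · simp
      · intro b _ hb; simp [hb]
      · intro hb; exact absurd (Finset.mem_univ r0) hb
    have hXpsd : X.PosSemidef := by
      rw [hXC]; exact Matrix.posSemidef_conjTranspose_mul_self C
    have hq := (h X hXpsd).dotProduct_mulVec_nonneg η
    have hkey := KyFanAux.key V lam ψ η
    have hMeq : (Matrix.of fun i a => ψ (i, a)) = M := rfl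
    have hNeq : (Matrix.of fun i a => η (i, a)) = N := rfl
    rw [hMeq, hNeq, hMtr, hMF2] at hkey
    have hq2 : (0 : ℂ) ≤ ((s - lam * (s * s) : ℝ) : ℂ) := by
      rw [show ((s - lam * (s * s) : ℝ) : ℂ)
          = ((s : ℝ) : ℂ) - (lam : ℂ) * ((Complex.normSq ((s : ℝ) : ℂ) : ℝ) : ℂ) by
        rw [Complex.normSq_ofReal]; push_cast; ring]
      rw [← hkey]
      exact hq
    have hineq : 0 ≤ s - lam * (s * s) := Complex.zero_le_real.mp hq2
    rcases eq_or_lt_of_le hs0 with hzero | hpos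
    · rw [← hzero, mul_zero]; norm_num
    · nlinarith
  · -- the Ky Fan bound implies k-positivity
    intro hs X hX
    obtain ⟨B, hB⟩ := (by open scoped MatrixOrder Matrix.Norms.L2Operator in exact CStarAlgebra.nonneg_iff_eq_star_mul_self.mp hX.nonneg : ∃ B : Matrix (Fin d × Fin k) (Fin d × Fin k) ℂ, X = Bᴴ * B)
    refine Matrix.PosSemidef.of_dotProduct_mulVec_nonneg ?_ ?_
    · exact KyFanAux.Y_isHermitian V lam X hX.isHermitian
    · intro x
      subst hB
      have h := KyFanAux.QF_sum V lam B x
      have hstep : ∀ a b : ℝ, lam * b ≤ a →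
          (0:ℂ) ≤ ((a : ℝ) : ℂ) - (lam : ℂ) * ((b : ℝ) : ℂ) := by
        intro a b hab
        rw [show ((a : ℝ) : ℂ) - (lam : ℂ) * ((b : ℝ) : ℂ) = ((a - lam * b : ℝ) : ℂ) by
          push_cast; ring]
        rw [Complex.zero_le_real]
        linarith
      have hpos : (0:ℂ) ≤ ∑ r : Fin d × Fin k,
          (((KyFanAux.F2 ((Matrix.of fun i a => (starRingEnd ℂ) (B r (i, a)))
              * (Matrix.of fun i a => x (i, a))ᴴ) : ℝ) : ℂ)
            - (lam : ℂ) * (Complex.normSq (((Matrix.of fun i a =>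
                (starRingEnd ℂ) (B r (i, a)))ᴴ
                * Vᴴ * (Matrix.of fun i a => x (i, a))).trace) : ℝ)) := by
        refine Finset.sum_nonneg fun r _ => hstep _ _ ?_
        exact KyFanAux.scalar_ineq hk1 hkd V σ hσ e he lam hlam hs
          (Matrix.of fun i a => (starRingEnd ℂ) (B r (i, a)))
          (Matrix.of fun i a => x (i, a))
      exact hpos.trans h.ge
end

section
/- For V ∈ M_d(C) and λ ≥ 0, the map φ_λ(x) = Tr(x)·1 − λ V x V* is completely positive if and only if λ ‖V‖_HS² ≤ 1, i.e., λ Tr(V V*) ≤ 1. -/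
open scoped Matrix ComplexOrder

/-- A map is completely positive if it is `k`-positive for all `k`. -/
def CompletelyPositive {ι : Type} [Fintype ι] [DecidableEq ι]
    (φ : Matrix ι ι ℂ → Matrix ι ι ℂ) : Prop :=
  ∀ k : ℕ, kPositive k φ

theorem posSemidef_sum' {n ι : Type} [Fintype n] [Fintype ι] (f : ι → Matrix n n ℂ)
    (h : ∀ i, (f i).PosSemidef) : (∑ i, f i).PosSemidef := by
  rw [Matrix.posSemidef_iff_dotProduct_mulVec]
  constructor
  · unfold Matrix.IsHermitian
    rw [Matrix.conjTranspose_sum]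
    exact Finset.sum_congr rfl fun i _ => (h i).1
  · intro x
    have hmv : star x ⬝ᵥ (∑ i, f i) *ᵥ x = ∑ i, star x ⬝ᵥ f i *ᵥ x := by
      simp only [Matrix.mulVec, dotProduct, Matrix.sum_apply, Finset.sum_mul,
        Finset.mul_sum]
      rw [Finset.sum_comm (γ := ι)]
      exact Finset.sum_congr rfl fun i _ => Finset.sum_comm
    rw [hmv]
    exact Finset.sum_nonneg fun i _ => (h i).dotProduct_mulVec_nonneg x

theorem outer_quad {n : Type} [Fintype n] (u y : n → ℂ) :
    star y ⬝ᵥ ((Matrix.of fun p q => star (u p) * u q) *ᵥ y)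
      = star (u ⬝ᵥ y) * (u ⬝ᵥ y) := by
  simp only [Matrix.mulVec, dotProduct, Matrix.of_apply, Pi.star_apply,
    Finset.mul_sum, Finset.sum_mul, star_sum, star_mul']
  rw [Finset.sum_comm]
  exact Finset.sum_congr rfl fun p _ => Finset.sum_congr rfl fun q _ => by ring

theorem outer_psd {n : Type} [Fintype n] (u : n → ℂ) :
    Matrix.PosSemidef (Matrix.of fun p q => star (u p) * u q) := by
  rw [Matrix.posSemidef_iff_dotProduct_mulVec]
  constructor
  · ext p q
    simp [Matrix.conjTranspose_apply, mul_comm]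
  · intro y
    rw [outer_quad]
    exact star_mul_self_nonneg _

theorem choi_psd {n : Type} [Fintype n] [DecidableEq n] (u : n → ℂ) (lam : ℝ)
    (hlam : 0 ≤ lam) (h : lam * ∑ p, Complex.normSq (u p) ≤ 1) :
    Matrix.PosSemidef ((1 : Matrix n n ℂ)
      - (lam : ℂ) • Matrix.of (fun p q => star (u p) * u q)) := by
  rw [Matrix.posSemidef_iff_dotProduct_mulVec]
  constructor
  · ext p q
    simp only [Matrix.conjTranspose_apply, Matrix.sub_apply, Matrix.smul_apply,
      Matrix.one_apply, Matrix.of_apply, star_sub, star_smul, star_mul', star_star,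
      Complex.star_def, Complex.conj_ofReal]
    by_cases hpq : p = q <;> simp [hpq, eq_comm, mul_comm, Complex.star_def]
  · intro y
    have hz : star y ⬝ᵥ ((1 : Matrix n n ℂ)
        - (lam : ℂ) • Matrix.of (fun p q => star (u p) * u q)) *ᵥ y
        = ((∑ p, Complex.normSq (y p) : ℝ) : ℂ)
          - (lam : ℂ) * ((Complex.normSq (u ⬝ᵥ y) : ℝ) : ℂ) := by
      rw [Matrix.sub_mulVec, dotProduct_sub, Matrix.smul_mulVec,
        dotProduct_smul, Matrix.one_mulVec, outer_quad]
      congr 1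
      · simp only [dotProduct, Pi.star_apply]
        push_cast
        exact Finset.sum_congr rfl fun p _ => by
          rw [Complex.normSq_eq_conj_mul_self, Complex.star_def]
      · rw [smul_eq_mul]
        congr 1
        rw [Complex.normSq_eq_conj_mul_self, Complex.star_def]
    rw [hz]
    have key : lam * Complex.normSq (u ⬝ᵥ y) ≤ ∑ p, Complex.normSq (y p) := by
      set U := ∑ p, Complex.normSq (u p) with hU
      set Y := ∑ p, Complex.normSq (y p) with hY
      have hY0 : 0 ≤ Y := Finset.sum_nonneg fun p _ => Complex.normSq_nonneg _
      have hcs : Complex.normSq (u ⬝ᵥ y) ≤ U * Y := by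
        have h1 : ‖u ⬝ᵥ y‖ ≤ ∑ p, ‖u p‖ * ‖y p‖ := by
          refine (norm_sum_le _ _).trans_eq ?_
          exact Finset.sum_congr rfl fun p _ => by simp [map_mul]
        have h2 : ‖u ⬝ᵥ y‖ ^ 2
            ≤ (∑ p, ‖u p‖ * ‖y p‖) ^ 2 :=
          pow_le_pow_left₀ (norm_nonneg _) h1 2
        have h3 := Finset.sum_mul_sq_le_sq_mul_sq Finset.univ
          (fun p => ‖u p‖) (fun p => ‖y p‖)
        rw [Complex.sq_norm] at h2
        refine h2.trans (h3.trans_eq ?_)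
        rw [hU, hY]
        congr 1 <;> exact Finset.sum_congr rfl fun p _ => by rw [Complex.sq_norm]
      calc lam * Complex.normSq (u ⬝ᵥ y) ≤ lam * (U * Y) :=
            mul_le_mul_of_nonneg_left hcs hlam
        _ = (lam * U) * Y := by ring
        _ ≤ 1 * Y := mul_le_mul_of_nonneg_right h hY0
        _ = Y := one_mul Y
    have hfin : (0:ℂ) ≤ (((∑ p, Complex.normSq (y p))
        - lam * Complex.normSq (u ⬝ᵥ y) : ℝ) : ℂ) := by
      rw [Complex.zero_le_real]
      linarith
    convert hfin using 1
    push_cast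
    ring

/-- `φ_λ(x) = Tr(x)·1 − λ V x V*` is completely positive iff `λ Tr(V V*) ≤ 1`. -/
theorem completelyPositive_iff_hsNorm {d : ℕ} (V : Matrix (Fin d) (Fin d) ℂ)
    (lam : ℝ) (hlam : 0 ≤ lam) :
    CompletelyPositive
        (fun x => x.trace • (1 : Matrix (Fin d) (Fin d) ℂ) - (lam : ℂ) • (V * x * Vᴴ))
      ↔ lam * ((V * Vᴴ).trace).re ≤ 1 := by
  set s : ℝ := ∑ p : Fin d × Fin d, Complex.normSq (V p.1 p.2) with hs_def
  have htr : ((V * Vᴴ).trace).re = s := by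
    rw [hs_def, Fintype.sum_prod_type]
    rw [Matrix.trace, Complex.re_sum]
    refine Finset.sum_congr rfl fun i _ => ?_
    rw [Matrix.diag_apply, Matrix.mul_apply, Complex.re_sum]
    exact Finset.sum_congr rfl fun j _ => by
      rw [Matrix.conjTranspose_apply, Complex.star_def, Complex.mul_conj,
        Complex.ofReal_re]
  rw [htr]
  have hstarv : ∑ p : Fin d × Fin d, star (V p.1 p.2) * V p.1 p.2 = (s : ℂ) := by
    rw [hs_def]
    push_cast
    exact Finset.sum_congr rfl fun p _ => by
      rw [Complex.normSq_eq_conj_mul_self, Complex.star_def]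
  constructor
  · -- forward direction
    intro hCP
    have hs0 : 0 ≤ s :=
      Finset.sum_nonneg fun p _ => Complex.normSq_nonneg _
    rcases eq_or_lt_of_le hs0 with hs0' | hs0'
    · rw [← hs0', mul_zero]; exact zero_le_one
    set w : Fin d × Fin d → ℂ := fun p => if p.1 = p.2 then 1 else 0 with hw
    have hM := hCP d (Matrix.of fun p q => star (w p) * w q) (outer_psd w)
    have hMentry : ∀ p q : Fin d × Fin d,
        (Matrix.of fun p q : Fin d × Fin d =>
          (fun x => x.trace • (1 : Matrix (Fin d) (Fin d) ℂ) - (lam : ℂ) • (V * x * Vᴴ))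
            (Matrix.of fun i j : Fin d =>
              (Matrix.of fun p' q' : Fin d × Fin d => star (w p') * w q') (i, p.2) (j, q.2))
            p.1 q.1) p q
        = (if p.2 = q.2 then (1:ℂ) else 0) * (if p.1 = q.1 then (1:ℂ) else 0)
          - (lam : ℂ) * (V p.1 p.2 * star (V q.1 q.2)) := by
      intro p q
      simp only [hw, Matrix.of_apply]
      simp [Matrix.trace, Matrix.diag, Matrix.mul_apply, Matrix.one_apply,
        Matrix.conjTranspose_apply, apply_ite, Finset.sum_ite_eq, Finset.sum_ite_eq',
        mul_ite, ite_mul, Finset.mul_sum, Finset.sum_mul, mul_comm, mul_assoc]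
      split_ifs <;> simp_all [Matrix.one_apply, eq_comm]
    have hquad := hM.dotProduct_mulVec_nonneg (fun p => V p.1 p.2)
    have hval : star (fun p : Fin d × Fin d => V p.1 p.2) ⬝ᵥ
        (Matrix.of fun p q : Fin d × Fin d =>
          (fun x => x.trace • (1 : Matrix (Fin d) (Fin d) ℂ) - (lam : ℂ) • (V * x * Vᴴ))
            (Matrix.of fun i j : Fin d =>
              (Matrix.of fun p' q' : Fin d × Fin d => star (w p') * w q') (i, p.2) (j, q.2))
            p.1 q.1) *ᵥ (fun p => V p.1 p.2)
        = (s : ℂ) - (lam : ℂ) * (s : ℂ) ^ 2 := by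
      simp only [dotProduct, Matrix.mulVec, Pi.star_apply]
      calc ∑ p : Fin d × Fin d, star (V p.1 p.2) *
              ∑ q : Fin d × Fin d, (Matrix.of fun p q : Fin d × Fin d =>
                (fun x => x.trace • (1 : Matrix (Fin d) (Fin d) ℂ)
                  - (lam : ℂ) • (V * x * Vᴴ))
                  (Matrix.of fun i j : Fin d =>
                    (Matrix.of fun p' q' : Fin d × Fin d => star (w p') * w q')
                      (i, p.2) (j, q.2)) p.1 q.1) p q * V q.1 q.2
          = ∑ p : Fin d × Fin d, (star (V p.1 p.2) * V p.1 p.2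
              - (lam : ℂ) * ((star (V p.1 p.2) * V p.1 p.2)
                * ∑ q : Fin d × Fin d, star (V q.1 q.2) * V q.1 q.2)) := by
            refine Finset.sum_congr rfl fun p _ => ?_
            rw [Finset.mul_sum]
            have : ∀ q : Fin d × Fin d, star (V p.1 p.2) *
                ((Matrix.of fun p q : Fin d × Fin d =>
                  (fun x => x.trace • (1 : Matrix (Fin d) (Fin d) ℂ)
                    - (lam : ℂ) • (V * x * Vᴴ))
                    (Matrix.of fun i j : Fin d =>
                      (Matrix.of fun p' q' : Fin d × Fin d => star (w p') * w q')
                        (i, p.2) (j, q.2)) p.1 q.1) p q * V q.1 q.2)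
                = star (V p.1 p.2) *
                  (((if p.2 = q.2 then (1:ℂ) else 0) * (if p.1 = q.1 then (1:ℂ) else 0)
                    - (lam : ℂ) * (V p.1 p.2 * star (V q.1 q.2))) * V q.1 q.2) := by
              intro q; rw [hMentry p q]
            rw [Finset.sum_congr rfl fun q _ => this q]
            have split : ∀ q : Fin d × Fin d, star (V p.1 p.2) *
                (((if p.2 = q.2 then (1:ℂ) else 0) * (if p.1 = q.1 then (1:ℂ) else 0)
                  - (lam : ℂ) * (V p.1 p.2 * star (V q.1 q.2))) * V q.1 q.2)
                = (if q = p then star (V p.1 p.2) * V p.1 p.2 else 0)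
                  - (lam : ℂ) * ((star (V p.1 p.2) * V p.1 p.2)
                    * (star (V q.1 q.2) * V q.1 q.2)) := by
              intro q
              by_cases h1 : p.1 = q.1 <;> by_cases h2 : p.2 = q.2 <;>
                [skip; skip; skip; skip] <;>
                simp [h1, h2, Prod.ext_iff, eq_comm] <;> ring
            rw [Finset.sum_congr rfl fun q _ => split q, Finset.sum_sub_distrib,
              Finset.sum_ite_eq' Finset.univ p
                (fun _ => star (V p.1 p.2) * V p.1 p.2)]
            simp [Finset.mul_sum]
        _ = (s : ℂ) - (lam : ℂ) * (s : ℂ) ^ 2 := by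
            rw [Finset.sum_sub_distrib, hstarv]
            have hx : ∑ x : Fin d × Fin d,
                (lam:ℂ) * (star (V x.1 x.2) * V x.1 x.2 * (s:ℂ))
                = (lam:ℂ) * (s:ℂ) * ∑ x : Fin d × Fin d, star (V x.1 x.2) * V x.1 x.2 := by
              rw [Finset.mul_sum]
              exact Finset.sum_congr rfl fun x _ => by ring
            rw [hx, hstarv]
            ring
    rw [hval] at hquad
    have him : ((s : ℂ) - (lam : ℂ) * (s : ℂ) ^ 2) = (((s - lam * s ^ 2 : ℝ)) : ℂ) := by
      push_cast; ring
    rw [him, Complex.zero_le_real] at hquad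
    nlinarith
  · -- backward direction
    intro hle
    set u : Fin d × Fin d → ℂ := fun p => V p.2 p.1 with hu
    have hsum_u : ∑ p : Fin d × Fin d, Complex.normSq (u p) = s := by
      rw [hs_def, hu]
      rw [Fintype.sum_prod_type]
      rw [Finset.sum_comm]
      rw [Fintype.sum_prod_type]
    have hC : Matrix.PosSemidef ((1 : Matrix (Fin d × Fin d) (Fin d × Fin d) ℂ)
        - (lam : ℂ) • Matrix.of (fun p q => star (u p) * u q)) :=
      choi_psd u lam hlam (by rw [hsum_u]; exact hle)
    obtain ⟨A, hA⟩ : ∃ B : Matrix (Fin d × Fin d) (Fin d × Fin d) ℂ,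
        ((1 : Matrix (Fin d × Fin d) (Fin d × Fin d) ℂ)
          - (lam : ℂ) • Matrix.of (fun p q => star (u p) * u q)) = Bᴴ * B := by
      open scoped MatrixOrder in
      exact ⟨CFC.sqrt _, by
        rw [← Matrix.star_eq_conjTranspose, (CFC.sqrt_nonneg _).isSelfAdjoint.star_eq,
          CFC.sqrt_mul_sqrt_self _ hC.nonneg]⟩
    have hCent : ∀ p q : Fin d × Fin d,
        (if p = q then (1:ℂ) else 0) - (lam : ℂ) * (star (u p) * u q)
          = ∑ t : Fin d × Fin d, star (A t p) * A t q := by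
      intro p q
      have := congrFun (congrFun hA p) q
      simp only [Matrix.sub_apply, Matrix.smul_apply, Matrix.one_apply, Matrix.of_apply,
        Matrix.mul_apply, Matrix.conjTranspose_apply, smul_eq_mul] at this
      exact this
    intro k X hX
    -- the Kraus-type operators tensored with the identity
    set L : (Fin d × Fin d) → Matrix (Fin d × Fin k) (Fin d × Fin k) ℂ :=
      fun t => Matrix.of fun p q =>
        A t (q.1, p.1) * (if p.2 = q.2 then 1 else 0) with hL
    have hMsum : (Matrix.of fun p q : Fin d × Fin k =>
        (fun x => x.trace • (1 : Matrix (Fin d) (Fin d) ℂ) - (lam : ℂ) • (V * x * Vᴴ))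
          (Matrix.of fun i j : Fin d => X (i, p.2) (j, q.2)) p.1 q.1)
        = ∑ t : Fin d × Fin d, L t * X * (L t)ᴴ := by
      ext p q
      rw [Matrix.sum_apply]
      have hterm : ∀ t : Fin d × Fin d, (L t * X * (L t)ᴴ) p q
          = ∑ i : Fin d, ∑ j : Fin d,
              A t (i, p.1) * X (i, p.2) (j, q.2) * star (A t (j, q.1)) := by
        intro t
        have hLX : ∀ (p' : Fin d × Fin k) (q' : Fin d × Fin k),
            (L t * X) p' q' = ∑ i, A t (i, p'.1) * X (i, p'.2) q' := by
          intro p' q'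
          rw [Matrix.mul_apply, Fintype.sum_prod_type]
          simp [hL, mul_ite, ite_mul, mul_zero, zero_mul, mul_one,
            Finset.sum_ite_eq, Finset.sum_ite_eq']
        rw [Matrix.mul_apply]
        have h2 : ∀ j' : Fin d × Fin k, (L t * X) p j' * (L t)ᴴ j' q
            = (∑ i, A t (i, p.1) * X (i, p.2) j')
              * (star (A t (j'.1, q.1)) * (if q.2 = j'.2 then 1 else 0)) := by
          intro j'
          rw [hLX]
          congr 1
          simp [hL, Matrix.conjTranspose_apply, star_mul', apply_ite (star : ℂ → ℂ)]
        rw [Finset.sum_congr rfl fun j' _ => h2 j', Fintype.sum_prod_type]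
        simp only [mul_ite, ite_mul, mul_zero, zero_mul, mul_one,
          Finset.sum_ite_eq, Finset.sum_ite_eq', Finset.mem_univ, if_true,
          Finset.sum_mul]
        rw [Finset.sum_comm]
      rw [Finset.sum_congr rfl fun t _ => hterm t]
      rw [Finset.sum_comm]
      have hswap : ∀ i : Fin d, ∑ t : Fin d × Fin d, ∑ j : Fin d,
            A t (i, p.1) * X (i, p.2) (j, q.2) * star (A t (j, q.1))
          = ∑ j : Fin d, X (i, p.2) (j, q.2) *
              ((if (j, q.1) = (i, p.1) then (1:ℂ) else 0)
                - (lam : ℂ) * (star (u (j, q.1)) * u (i, p.1))) := by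
        intro i
        rw [Finset.sum_comm]
        refine Finset.sum_congr rfl fun j _ => ?_
        rw [hCent (j, q.1) (i, p.1), Finset.mul_sum]
        exact Finset.sum_congr rfl fun t _ => by ring
      rw [Finset.sum_congr rfl fun i _ => hswap i]
      -- now compute the closed form
      simp only [hu, Prod.mk.injEq, Matrix.of_apply, Matrix.smul_apply, Matrix.sub_apply,
        Matrix.trace, Matrix.diag_apply, Matrix.mul_apply, Matrix.one_apply,
        Matrix.conjTranspose_apply, smul_eq_mul]
      have hr : ∀ i j : Fin d, X (i, p.2) (j, q.2)
          * ((if j = i ∧ q.1 = p.1 then (1:ℂ) else 0)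
            - (lam:ℂ) * (star (V q.1 j) * V p.1 i))
          = (if j = i ∧ q.1 = p.1 then X (i, p.2) (j, q.2) else 0)
            - (lam:ℂ) * (V p.1 i * X (i, p.2) (j, q.2) * star (V q.1 j)) := by
        intro i j
        split_ifs <;> ring
      simp only [hr, Finset.sum_sub_distrib]
      congr 1
      · by_cases hpq : q.1 = p.1
        · simp [hpq, mul_ite, mul_one, Finset.sum_ite_eq, Finset.sum_ite_eq']
        · have : ¬ (p.1 = q.1) := fun h' => hpq h'.symm
          simp [hpq, this]
      · rw [Finset.mul_sum, Finset.sum_comm]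
        refine Finset.sum_congr rfl fun i _ => ?_
        rw [Finset.sum_mul, Finset.mul_sum]
    rw [hMsum]
    refine posSemidef_sum' _ fun t => hX.mul_mul_conjTranspose_same (L t)
end

section
/- Let φ : M_d(C) → M_d(C) be linear and k ∈ {1,…,d}. Then φ is k-positive if and only if for every orthogonal projection F of rank k, the map x ↦ F φ(x) F is completely positive. -/
open scoped Matrix ComplexOrder

section Aux
open Matrix

lemma aux_posSemidef_of_quad {n : Type} [Fintype n] [DecidableEq n] (M : Matrix n n ℂ)
    (h : ∀ x : n → ℂ, 0 ≤ dotProduct (star x) (M.mulVec x)) : M.PosSemidef := by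
  refine Matrix.PosSemidef.of_dotProduct_mulVec_nonneg ?_ h
  rw [Matrix.isHermitian_iff_isSymmetric, LinearMap.isSymmetric_iff_inner_map_self_real]
  intro v
  set x : n → ℂ := WithLp.equiv 2 (n → ℂ) v with hx
  have e1 : (inner ℂ (Matrix.toEuclideanLin M v) v : ℂ) = dotProduct (star (M.mulVec x)) x := by
    rw [PiLp.inner_apply]
    simp only [RCLike.inner_apply]
    exact Finset.sum_congr rfl fun i _ => mul_comm _ _
  have hz := h x
  have him : (dotProduct (star x) (M.mulVec x)).im = 0 := by
    have := Complex.le_def.mp hz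
    simpa using this.2.symm
  have hconj : (starRingEnd ℂ) (dotProduct (star x) (M.mulVec x))
      = dotProduct (star x) (M.mulVec x) := Complex.conj_eq_iff_im.mpr him
  have e2 : dotProduct (star (M.mulVec x)) x
      = (starRingEnd ℂ) (dotProduct (star x) (M.mulVec x)) := by
    simp [dotProduct, map_sum, mul_comm]
  rw [e1, e2, hconj]
  exact hconj

variable {d : ℕ}

/-- The tensor extension `φ ⊗ id` as acting on big matrices. -/
def zmat {d r : ℕ} (φ : Matrix (Fin d) (Fin d) ℂ → Matrix (Fin d) (Fin d) ℂ)
    (X : Matrix (Fin d × Fin r) (Fin d × Fin r) ℂ) : Matrix (Fin d × Fin r) (Fin d × Fin r) ℂ :=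
  Matrix.of fun p q => φ (Matrix.of fun i j : Fin d => X (i, p.2) (j, q.2)) p.1 q.1

/-- `F ⊗ 1`. -/
def kronF {d : ℕ} (F : Matrix (Fin d) (Fin d) ℂ) (m : ℕ) :
    Matrix (Fin d × Fin m) (Fin d × Fin m) ℂ :=
  Matrix.of fun p q => if p.2 = q.2 then F p.1 q.1 else 0

/-- `1 ⊗ B`. -/
def kronB {d k m : ℕ} (B : Matrix (Fin k) (Fin m) ℂ) :
    Matrix (Fin d × Fin k) (Fin d × Fin m) ℂ :=
  Matrix.of fun p q => if p.1 = q.1 then B p.2 q.2 else 0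

lemma aux_quad_conj {n m : Type} [Fintype n] [Fintype m] (N : Matrix n m ℂ) (Z : Matrix m m ℂ)
    (u : n → ℂ) :
    dotProduct (star u) ((N * Z * Nᴴ).mulVec u)
      = dotProduct (star (Nᴴ.mulVec u)) (Z.mulVec (Nᴴ.mulVec u)) := by
  simp only [Matrix.star_mulVec, Matrix.conjTranspose_conjTranspose, Matrix.dotProduct_mulVec,
    Matrix.vecMul_vecMul]

lemma aux_compress_eq {m : ℕ} (φ₀ : Matrix (Fin d) (Fin d) ℂ → Matrix (Fin d) (Fin d) ℂ)
    (F : Matrix (Fin d) (Fin d) ℂ) (hF : F.IsHermitian)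
    (X : Matrix (Fin d × Fin m) (Fin d × Fin m) ℂ) :
    zmat (fun x => F * φ₀ x * F) X = kronF F m * zmat φ₀ X * (kronF F m)ᴴ := by
  ext ⟨i, a⟩ ⟨j, b⟩
  simp only [zmat, kronF, Matrix.mul_apply, Matrix.conjTranspose_apply, Matrix.of_apply,
    Fintype.sum_prod_type, ite_mul, mul_ite, zero_mul, mul_zero, apply_ite (star : ℂ → ℂ),
    star_zero, Finset.sum_ite_eq, Finset.sum_ite_eq', Finset.mem_univ, if_true]
  refine Finset.sum_congr rfl fun j' _ => ?_
  rw [hF.apply]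

lemma aux_slice_kron {k m : ℕ} (B : Matrix (Fin k) (Fin m) ℂ)
    (X : Matrix (Fin d × Fin m) (Fin d × Fin m) ℂ) (c c' : Fin k) :
    (Matrix.of fun i j : Fin d => ((kronB B : Matrix (Fin d × Fin k) (Fin d × Fin m) ℂ) * X *
        (kronB B : Matrix (Fin d × Fin k) (Fin d × Fin m) ℂ)ᴴ) (i, c) (j, c'))
      = ∑ a : Fin m, ∑ b : Fin m, (B c a * star (B c' b)) •
          (Matrix.of fun i j : Fin d => X (i, a) (j, b)) := by
  ext i j
  simp only [Matrix.of_apply, Matrix.sum_apply, Matrix.smul_apply, smul_eq_mul,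
    Matrix.mul_apply, Matrix.conjTranspose_apply, kronB, Fintype.sum_prod_type, ite_mul,
    mul_ite, zero_mul, mul_zero, apply_ite (star : ℂ → ℂ), star_zero,
    Finset.sum_ite_eq, Finset.sum_ite_eq', Finset.mem_univ, if_true,
    Finset.sum_ite_irrel, Finset.sum_const_zero]
  rw [Finset.sum_comm]
  refine Finset.sum_congr rfl fun a _ => ?_
  rw [Finset.sum_mul]
  exact Finset.sum_congr rfl fun b _ => by ring

lemma aux_zmat_kron {k m : ℕ} (φ : Matrix (Fin d) (Fin d) ℂ →ₗ[ℂ] Matrix (Fin d) (Fin d) ℂ)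
    (B : Matrix (Fin k) (Fin m) ℂ) (X : Matrix (Fin d × Fin m) (Fin d × Fin m) ℂ) :
    zmat (fun x => φ x) ((kronB B : Matrix (Fin d × Fin k) (Fin d × Fin m) ℂ) * X *
        (kronB B : Matrix (Fin d × Fin k) (Fin d × Fin m) ℂ)ᴴ)
      = (kronB B : Matrix (Fin d × Fin k) (Fin d × Fin m) ℂ) * zmat (fun x => φ x) X *
        (kronB B : Matrix (Fin d × Fin k) (Fin d × Fin m) ℂ)ᴴ := by
  ext ⟨i, c⟩ ⟨j, c'⟩
  have hl : (zmat (fun x => φ x) ((kronB B : Matrix (Fin d × Fin k) (Fin d × Fin m) ℂ) * X *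
      (kronB B : Matrix (Fin d × Fin k) (Fin d × Fin m) ℂ)ᴴ)) (i, c) (j, c')
      = ∑ a : Fin m, ∑ b : Fin m, (B c a * star (B c' b)) *
          φ (Matrix.of fun i' j' : Fin d => X (i', a) (j', b)) i j := by
    show φ _ i j = _
    rw [aux_slice_kron B X c c', map_sum]
    simp only [map_sum, LinearMap.map_smul, Matrix.sum_apply, Matrix.smul_apply, smul_eq_mul]
  rw [hl]
  simp only [zmat, Matrix.mul_apply, Matrix.conjTranspose_apply, Matrix.of_apply, kronB,
    Fintype.sum_prod_type, ite_mul, mul_ite, zero_mul, mul_zero, apply_ite (star : ℂ → ℂ),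
    star_zero, Finset.sum_ite_eq, Finset.sum_ite_eq', Finset.mem_univ, if_true,
    Finset.sum_ite_irrel, Finset.sum_const_zero]
  rw [Finset.sum_comm]
  refine Finset.sum_congr rfl fun a _ => ?_
  rw [Finset.sum_mul]
  exact Finset.sum_congr rfl fun b _ => by ring

lemma aux_proj_factor {k : ℕ} (F : Matrix (Fin d) (Fin d) ℂ) (hF : F.IsHermitian)
    (hP : F * F = F) (hrk : F.rank = k) :
    ∃ A : Matrix (Fin d) (Fin k) ℂ, F = A * Aᴴ := by
  classical
  set V : Matrix (Fin d) (Fin d) ℂ := (hF.eigenvectorUnitary : Matrix (Fin d) (Fin d) ℂ) with hV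
  have hV1 : V * star V = 1 := Matrix.mem_unitaryGroup_iff.mp hF.eigenvectorUnitary.2
  have hV2 : star V * V = 1 := Matrix.mem_unitaryGroup_iff'.mp hF.eigenvectorUnitary.2
  set g : Fin d → ℂ := fun i => (hF.eigenvalues i : ℂ) with hg
  have hspec : F = V * Matrix.diagonal g * star V := hF.spectral_theorem
  have hDD : Matrix.diagonal g * Matrix.diagonal g = Matrix.diagonal g := by
    have h1 : (V * Matrix.diagonal g * star V) * (V * Matrix.diagonal g * star V)
        = V * Matrix.diagonal g * star V := by rw [← hspec]; exact hP
    have h2 : V * (Matrix.diagonal g * Matrix.diagonal g) * star V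
        = V * Matrix.diagonal g * star V := by
      calc V * (Matrix.diagonal g * Matrix.diagonal g) * star V
          = (V * Matrix.diagonal g) * (star V * V) * (Matrix.diagonal g * star V) := by
            rw [hV2]; noncomm_ring
        _ = (V * Matrix.diagonal g * star V) * (V * Matrix.diagonal g * star V) := by
            noncomm_ring
        _ = V * Matrix.diagonal g * star V := h1
    have h3 := congrArg (fun M => star V * M * V) h2
    simpa only [Matrix.mul_assoc, ← Matrix.mul_assoc (star V) V, hV2, Matrix.one_mul,
      Matrix.mul_one, hV1] using h3
  have heig : ∀ l : Fin d, g l ≠ 0 → g l = 1 := by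
    intro l hl
    have := congrFun (congrFun (congrArg (fun M => (M : Matrix (Fin d) (Fin d) ℂ)) hDD) l) l
    simp only [Matrix.mul_apply, Matrix.diagonal_apply] at this
    have h4 : g l * g l = g l := by
      simpa [Finset.sum_ite_eq, Matrix.diagonal_apply_eq] using this
    exact mul_left_cancel₀ hl (by rw [h4, mul_one])
  have hcard : Fintype.card {i // hF.eigenvalues i ≠ 0} = k := by
    rw [← hF.rank_eq_card_non_zero_eigs, hrk]
  let e : Fin k ≃ {i // hF.eigenvalues i ≠ 0} := (Fintype.equivFinOfCardEq hcard).symm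
  refine ⟨Matrix.of fun i c => V i (e c : Fin d), ?_⟩
  ext i j
  have hentry : F i j = ∑ l : Fin d, V i l * g l * star (V j l) := by
    rw [hspec]
    simp [Matrix.mul_apply, Matrix.mul_diagonal, Matrix.star_apply, Matrix.diagonal_apply,
      Matrix.star_eq_conjTranspose, Matrix.conjTranspose_apply, Finset.sum_mul, ite_mul,
      mul_ite, zero_mul, mul_zero, Finset.sum_ite_eq, Finset.sum_ite_eq',
      Finset.sum_ite_irrel, Finset.sum_const_zero]
  rw [hentry]
  have hfilter : ∑ l : Fin d, V i l * g l * star (V j l)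
      = ∑ l ∈ Finset.univ.filter (fun l => hF.eigenvalues l ≠ 0),
          V i l * g l * star (V j l) := by
    refine (Finset.sum_filter_of_ne fun l _ hne => ?_).symm
    intro h0
    apply hne
    have : g l = 0 := by rw [hg]; simp [h0]
    simp [this]
  rw [hfilter]
  rw [Finset.sum_subtype (p := fun l => hF.eigenvalues l ≠ 0) (Finset.univ.filter (fun l => hF.eigenvalues l ≠ 0))
      (by intro l; simp) (fun l => V i l * g l * star (V j l))]
  rw [← Equiv.sum_comp e (fun l => V i (l : Fin d) * g (l : Fin d) * star (V j (l : Fin d)))]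
  simp only [Matrix.mul_apply, Matrix.conjTranspose_apply, Matrix.of_apply]
  refine Finset.sum_congr rfl fun c _ => ?_
  have h1 : g (e c : Fin d) = 1 := heig _ (by simp [hg, (e c).2])
  rw [h1]
  ring

open scoped InnerProductSpace in
lemma aux_exists_isometry {k : ℕ} (hkd : k ≤ d) (vm : Matrix (Fin d) (Fin k) ℂ) :
    ∃ U : Matrix (Fin d) (Fin k) ℂ, Uᴴ * U = 1 ∧ U * Uᴴ * vm = vm := by
  classical
  set E := EuclideanSpace ℂ (Fin d)
  set cols : Fin k → E := fun a => (WithLp.equiv 2 (Fin d → ℂ)).symm (fun i => vm i a) with hcols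
  set W : Submodule ℂ E := Submodule.span ℂ (Set.range cols) with hW
  set r : ℕ := Module.finrank ℂ W with hr
  have hrk : r ≤ k := by
    have := finrank_range_le_card (R := ℂ) cols
    simpa [Set.finrank, ← hW, ← hr] using this
  have hrd : r ≤ d := hrk.trans hkd
  set c : OrthonormalBasis (Fin r) ℂ W := stdOrthonormalBasis ℂ W with hc
  set fam : Fin d → E := fun i => if h : (i : ℕ) < r then (c ⟨(i : ℕ), h⟩ : E) else 0 with hfam
  set s : Set (Fin d) := {i | (i : ℕ) < r} with hs
  have horth : Orthonormal ℂ (s.restrict fam) := by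
    rw [orthonormal_iff_ite]
    rintro ⟨i, hi⟩ ⟨j, hj⟩
    have hi' : (i : ℕ) < r := hi
    have hj' : (j : ℕ) < r := hj
    simp only [Set.restrict_apply, Set.restrict, hfam, dif_pos hi', dif_pos hj']
    rw [← Submodule.coe_inner, orthonormal_iff_ite.mp c.orthonormal]
    by_cases hij : (i : ℕ) = (j : ℕ)
    · simp [Fin.ext_iff, Subtype.ext_iff, hij]
    · simp [Fin.ext_iff, Subtype.ext_iff, hij]
  have hcardE : Module.finrank ℂ E = Fintype.card (Fin d) := by simp [E]
  obtain ⟨b, hb⟩ := horth.exists_orthonormalBasis_extension_of_card_eq hcardE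
  refine ⟨Matrix.of fun i cc => (WithLp.equiv 2 (Fin d → ℂ)) (b (Fin.castLE hkd cc)) i, ?_, ?_⟩
  · ext c₁ c₂
    have hbase := orthonormal_iff_ite.mp b.orthonormal (Fin.castLE hkd c₁) (Fin.castLE hkd c₂)
    rw [PiLp.inner_apply] at hbase
    simp only [RCLike.inner_apply] at hbase
    simp only [Matrix.mul_apply, Matrix.conjTranspose_apply, Matrix.of_apply, Matrix.one_apply]
    refine Eq.trans ?_ (hbase.trans ?_)
    · exact Finset.sum_congr rfl fun x _ => mul_comm _ _
    · simp [Fin.ext_iff]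
  · -- orthogonality of later basis vectors to W
    have horthog : ∀ j : Fin d, ¬ ((j : ℕ) < r) → ∀ w : W, ⟪b j, (w : E)⟫_ℂ = 0 := by
      intro j hj w
      have hcoe : ((∑ t : Fin r, c.repr w t • c t : W) : E)
          = ∑ t : Fin r, c.repr w t • (c t : E) := by
        simp
      have hwE : (w : E) = ∑ t : Fin r, c.repr w t • (c t : E) := by
        rw [← hcoe, c.sum_repr w]
      rw [hwE, inner_sum]
      refine Finset.sum_eq_zero fun t _ => ?_
      rw [inner_smul_right]
      have htd : (t : ℕ) < d := lt_of_lt_of_le t.2 hrd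
      have hmem : (⟨(t : ℕ), htd⟩ : Fin d) ∈ s := by
        simpa [hs] using t.2
      have hct : (c t : E) = b ⟨(t : ℕ), htd⟩ := by
        rw [hb _ hmem, hfam]
        simp only [dif_pos t.2]
      rw [hct]
      have := orthonormal_iff_ite.mp b.orthonormal j ⟨(t : ℕ), htd⟩
      rw [this, if_neg, mul_zero]
      intro hjt
      exact hj (by rw [hjt]; exact t.2)
    ext i a
    have hmemW : cols a ∈ W := Submodule.subset_span ⟨a, rfl⟩
    have happ : ∑ j : Fin d, ⟪b j, cols a⟫_ℂ * (WithLp.equiv 2 (Fin d → ℂ)) (b j) i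
        = vm i a := by
      have h0 := congrArg (WithLp.linearEquiv 2 ℂ (Fin d → ℂ)) (b.sum_repr' (cols a))
      rw [map_sum] at h0
      have h1 := congrFun h0 i
      rw [Finset.sum_apply] at h1
      simp only [LinearEquiv.map_smul, Pi.smul_apply, smul_eq_mul] at h1
      exact h1
    have hvanish : ∀ j : Fin d, j ∉ (Finset.univ : Finset (Fin k)).image (Fin.castLE hkd) →
        (⟪b j, cols a⟫_ℂ * (WithLp.equiv 2 (Fin d → ℂ)) (b j) i) = 0 := by
      intro j hj
      have hjk : ¬ ((j : ℕ) < r) := by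
        intro hjr
        exact hj (Finset.mem_image.mpr ⟨⟨(j : ℕ), lt_of_lt_of_le hjr hrk⟩,
          Finset.mem_univ _, by simp [Fin.ext_iff]⟩)
      rw [horthog j hjk ⟨cols a, hmemW⟩, zero_mul]
    have himage : ∑ cc : Fin k, ⟪b (Fin.castLE hkd cc), cols a⟫_ℂ *
          (WithLp.equiv 2 (Fin d → ℂ)) (b (Fin.castLE hkd cc)) i
        = ∑ j : Fin d, ⟪b j, cols a⟫_ℂ * (WithLp.equiv 2 (Fin d → ℂ)) (b j) i := by
      have him2 : ∑ x ∈ Finset.univ.image (Fin.castLE hkd),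
          (⟪b x, cols a⟫_ℂ * (WithLp.equiv 2 (Fin d → ℂ)) (b x) i)
          = ∑ cc : Fin k, ⟪b (Fin.castLE hkd cc), cols a⟫_ℂ *
              (WithLp.equiv 2 (Fin d → ℂ)) (b (Fin.castLE hkd cc)) i :=
        Finset.sum_image (fun x _ y _ hxy => Fin.castLE_injective hkd hxy)
      rw [← him2]
      exact Finset.sum_subset (Finset.subset_univ _) fun x _ hx => hvanish x hx
    have hinner : ∀ cc : Fin k, ⟪b (Fin.castLE hkd cc), cols a⟫_ℂ
        = ∑ j : Fin d, star ((WithLp.equiv 2 (Fin d → ℂ)) (b (Fin.castLE hkd cc)) j)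
            * vm j a := by
      intro cc
      rw [PiLp.inner_apply]
      simp only [RCLike.inner_apply]
      exact Finset.sum_congr rfl fun j _ => mul_comm _ _
    have hUU : ((Matrix.of fun i cc => (WithLp.equiv 2 (Fin d → ℂ)) (b (Fin.castLE hkd cc)) i) *
          (Matrix.of fun i cc => (WithLp.equiv 2 (Fin d → ℂ)) (b (Fin.castLE hkd cc)) i)ᴴ *
          vm) i a
        = ∑ cc : Fin k, (WithLp.equiv 2 (Fin d → ℂ)) (b (Fin.castLE hkd cc)) i *
            (∑ j : Fin d, star ((WithLp.equiv 2 (Fin d → ℂ)) (b (Fin.castLE hkd cc)) j)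
              * vm j a) := by
      rw [Matrix.mul_assoc]
      simp [Matrix.mul_apply, Matrix.conjTranspose_apply, Finset.mul_sum]
    rw [hUU]
    rw [← happ, ← himage]
    exact Finset.sum_congr rfl fun cc _ => by rw [← hinner cc]; ring

end Aux

/-- A linear map `φ` on `M_d(ℂ)` is `k`-positive iff for every orthogonal projection `F` of
rank `k` the map `x ↦ F φ(x) F` is completely positive. -/
theorem kPositive_iff_compress_cp {d : ℕ}
    (φ : Matrix (Fin d) (Fin d) ℂ →ₗ[ℂ] Matrix (Fin d) (Fin d) ℂ)
    (k : ℕ) (hk1 : 1 ≤ k) (hkd : k ≤ d) :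
    kPositive k (fun x => φ x) ↔
      ∀ F : Matrix (Fin d) (Fin d) ℂ, F.IsHermitian → F * F = F → F.rank = k →
        CompletelyPositive (fun x => F * φ x * F) := by
  constructor
  · intro hφ F hFh hFP hFr m X hX
    show (zmat (fun x => F * φ x * F) X).PosSemidef
    obtain ⟨A, hA⟩ := aux_proj_factor F hFh hFP hFr
    refine aux_posSemidef_of_quad _ fun v => ?_
    rw [aux_compress_eq (fun x => φ x) F hFh X, aux_quad_conj]
    set B2 : Matrix (Fin k) (Fin m) ℂ :=
      Matrix.of (fun c bb => ∑ i : Fin d, A i c * star (v (i, bb))) with hB2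
    set u : Fin d × Fin k → ℂ := fun p => A p.1 p.2 with hu
    have hw : (kronF F m)ᴴ.mulVec v
        = ((kronB B2 : Matrix (Fin d × Fin k) (Fin d × Fin m) ℂ))ᴴ.mulVec u := by
      funext q
      obtain ⟨j, bb⟩ := q
      simp only [Matrix.mulVec, dotProduct, Matrix.conjTranspose_apply, kronF, kronB,
        Matrix.of_apply, Fintype.sum_prod_type, apply_ite (star : ℂ → ℂ), star_zero, ite_mul,
        zero_mul, mul_ite, mul_zero, Finset.sum_ite_eq, Finset.sum_ite_eq', Finset.mem_univ,
        if_true, Finset.sum_ite_irrel, Finset.sum_const_zero, hu, hB2]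
      -- LHS : ∑ i, star (F i j) * v (i, bb);  RHS : ∑ c, star (B2 c bb) * A j c
      have hFji : ∀ i : Fin d, star (F i j) = ∑ c : Fin k, A j c * star (A i c) := by
        intro i
        rw [hFh.apply j i, hA]
        simp [Matrix.mul_apply, Matrix.conjTranspose_apply]
      have hB2s : ∀ c : Fin k, star ((∑ i : Fin d, A i c * star (v (i, bb))))
          = ∑ i : Fin d, star (A i c) * v (i, bb) := by
        intro c
        rw [star_sum]
        exact Finset.sum_congr rfl fun i _ => by simp [mul_comm]
      calc ∑ i : Fin d, star (F i j) * v (i, bb)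
          = ∑ i : Fin d, ∑ c : Fin k, A j c * star (A i c) * v (i, bb) := by
            refine Finset.sum_congr rfl fun i _ => ?_
            rw [hFji i, Finset.sum_mul]
        _ = ∑ c : Fin k, ∑ i : Fin d, A j c * star (A i c) * v (i, bb) := Finset.sum_comm
        _ = ∑ c : Fin k, star ((∑ i : Fin d, A i c * star (v (i, bb)))) * A j c := by
            refine Finset.sum_congr rfl fun c _ => ?_
            rw [hB2s c, Finset.sum_mul]
            exact Finset.sum_congr rfl fun i _ => by ring
    rw [hw, ← aux_quad_conj, ← aux_zmat_kron φ B2 X]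
    exact (hφ _ (hX.mul_mul_conjTranspose_same _)).dotProduct_mulVec_nonneg u
  · intro h X hX
    refine aux_posSemidef_of_quad _ fun v => ?_
    obtain ⟨U, hU1, hUv⟩ := aux_exists_isometry hkd (Matrix.of fun i c => v (i, c))
    have hFh : (U * Uᴴ).IsHermitian := by
      rw [Matrix.IsHermitian, Matrix.conjTranspose_mul, Matrix.conjTranspose_conjTranspose]
    have hFP : (U * Uᴴ) * (U * Uᴴ) = U * Uᴴ := by
      rw [Matrix.mul_assoc, ← Matrix.mul_assoc Uᴴ U Uᴴ, hU1, Matrix.one_mul]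
    have hFr : (U * Uᴴ).rank = k := by
      rw [Matrix.rank_self_mul_conjTranspose, ← Matrix.rank_conjTranspose_mul_self, hU1,
        Matrix.rank_one]
      simp
    have hY := h (U * Uᴴ) hFh hFP hFr k X hX
    have h0 : 0 ≤ dotProduct (star v)
        ((zmat (fun x => (U * Uᴴ) * φ x * (U * Uᴴ)) X).mulVec v) := hY.dotProduct_mulVec_nonneg v
    rw [aux_compress_eq (fun x => φ x) (U * Uᴴ) hFh X, aux_quad_conj] at h0
    have hvv : (kronF (U * Uᴴ) k)ᴴ.mulVec v = v := by
      funext q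
      obtain ⟨j, bb⟩ := q
      have hcol := congrFun (congrFun hUv j) bb
      simp only [Matrix.mul_apply, Matrix.of_apply] at hcol
      simp only [Matrix.mulVec, dotProduct, Matrix.conjTranspose_apply, kronF,
        Matrix.of_apply, Fintype.sum_prod_type, apply_ite (star : ℂ → ℂ), star_zero, ite_mul,
        zero_mul, mul_ite, mul_zero, Finset.sum_ite_eq, Finset.sum_ite_eq', Finset.mem_univ,
        if_true, Finset.sum_ite_irrel, Finset.sum_const_zero]
      rw [← hcol]
      exact Finset.sum_congr rfl fun i _ => by rw [hFh.apply j i, Matrix.mul_apply]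
    rwa [hvv] at h0
end

section
/- For any unit vector ψ ∈ C^d ⊗ C^d with p = |ψ⟩⟨ψ|, the Schmidt-2 operator norm satisfies ‖1 ⊗ p + p ⊗ 1‖_{S(2)} ≤ 4 ‖p‖_{S(1)}, where ‖A‖_{S(k)} = sup over unit vectors χ of Schmidt rank ≤ k of ⟨χ, A χ⟩. -/
open scoped Matrix Kronecker


def toE {I : Type*} [Fintype I] (f : I → ℂ) : EuclideanSpace ℂ I := WithLp.toLp 2 f

lemma toE_norm_sq {I : Type*} [Fintype I] (f : I → ℂ) :
    ‖toE f‖ ^ 2 = ∑ q, Complex.normSq (f q) := by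
  rw [EuclideanSpace.norm_eq, Real.sq_sqrt (by positivity)]
  simp [toE, Complex.sq_norm]

lemma block {I : Type*} [Fintype I] {lam : ℝ} (hlam0 : 0 ≤ lam) {n : ℕ} (hn : n ≤ 2)
    (F : Fin n → I → ℂ) (C : Fin n → ℝ)
    (hF : ∀ t, ∑ r, Complex.normSq (F t r) ≤ lam * C t)
    (hCsum : ∑ t, C t = 1) :
    ∑ r, Complex.normSq (∑ t, F t r) ≤ 2 * lam := by
  have h0 : toE (fun r => ∑ t, F t r) = ∑ t, toE (F t) := by
    ext r
    simp [toE, WithLp.ofLp_sum]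
  have h1 : ‖toE (fun r => ∑ t, F t r)‖ ≤ ∑ t, ‖toE (F t)‖ := by
    rw [h0]; exact norm_sum_le _ _
  have h2 : (∑ t, ‖toE (F t)‖) ^ 2 ≤ (n : ℝ) * ∑ t, ‖toE (F t)‖ ^ 2 := by
    simpa using sq_sum_le_card_mul_sum_sq (s := (Finset.univ : Finset (Fin n)))
      (f := fun t => ‖toE (F t)‖)
  have h3 : ∑ t, ‖toE (F t)‖ ^ 2 ≤ lam := by
    calc ∑ t, ‖toE (F t)‖ ^ 2 = ∑ t, ∑ r, Complex.normSq (F t r) := by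
          exact Finset.sum_congr rfl fun t _ => toE_norm_sq (F t)
      _ ≤ ∑ t, lam * C t := Finset.sum_le_sum fun t _ => hF t
      _ = lam * ∑ t, C t := by rw [Finset.mul_sum]
      _ = lam := by rw [hCsum, mul_one]
  calc ∑ r, Complex.normSq (∑ t, F t r) = ‖toE (fun r => ∑ t, F t r)‖ ^ 2 :=
        (toE_norm_sq _).symm
    _ ≤ (∑ t, ‖toE (F t)‖) ^ 2 := by
        refine pow_le_pow_left₀ (norm_nonneg _) h1 2
    _ ≤ (n : ℝ) * ∑ t, ‖toE (F t)‖ ^ 2 := h2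
    _ ≤ 2 * lam := by
        have hnn : (n : ℝ) ≤ 2 := by exact_mod_cast hn
        have hs0 : 0 ≤ ∑ t, ‖toE (F t)‖ ^ 2 :=
          Finset.sum_nonneg fun t _ => sq_nonneg _
        nlinarith

lemma cauchy_schwarz_sum {I : Type*} [Fintype I] (f g : I → ℂ) :
    Complex.normSq (∑ q, (starRingEnd ℂ) (f q) * g q)
      ≤ (∑ q, Complex.normSq (f q)) * (∑ q, Complex.normSq (g q)) := by
  have h1 : (inner ℂ (toE f) (toE g) : ℂ) = ∑ q, (starRingEnd ℂ) (f q) * g q := by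
    simp [toE, PiLp.inner_apply, RCLike.inner_apply, mul_comm]
  have h2 := norm_inner_le_norm (𝕜 := ℂ) (toE f) (toE g)
  have h3 : ‖(inner ℂ (toE f) (toE g) : ℂ)‖ ^ 2 ≤ (‖toE f‖ * ‖toE g‖) ^ 2 :=
    pow_le_pow_left₀ (norm_nonneg _) h2 2
  calc Complex.normSq (∑ q, (starRingEnd ℂ) (f q) * g q)
      = ‖(inner ℂ (toE f) (toE g) : ℂ)‖ ^ 2 := by rw [h1, ← Complex.sq_norm]
    _ ≤ (‖toE f‖ * ‖toE g‖) ^ 2 := h3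
    _ = (∑ q, Complex.normSq (f q)) * (∑ q, Complex.normSq (g q)) := by
        rw [mul_pow, toE_norm_sq, toE_norm_sq]

lemma rank_vecMulVec_le' {m n : Type*} [Fintype m] [Fintype n] [DecidableEq n]
    (u : m → ℂ) (v : n → ℂ) : (Matrix.vecMulVec u v).rank ≤ 1 := by
  rw [Matrix.vecMulVec_eq Unit]
  refine le_trans (Matrix.rank_mul_le _ _) ?_
  refine le_trans (min_le_left _ _) ?_
  refine le_trans (Matrix.rank_le_card_width _) ?_
  simp

lemma decomp {I J : Type*} [Fintype I] [Fintype J] [DecidableEq J]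
    (X : Matrix I J ℂ) :
    ∃ (n : ℕ) (u : Fin n → I → ℂ) (c : Fin n → J → ℂ),
      n = X.rank ∧
      (∀ t, ∑ q, Complex.normSq (u t q) = 1) ∧
      (∑ t, ∑ s, Complex.normSq (c t s) = ∑ s, ∑ i, Complex.normSq (X i s)) ∧
      (∀ i s, X i s = ∑ t, c t s * u t i) := by
  classical
  set V : Submodule ℂ (EuclideanSpace ℂ I) := Submodule.map
    ((WithLp.linearEquiv 2 ℂ (I → ℂ)).symm : (I → ℂ) →ₗ[ℂ] EuclideanSpace ℂ I)
    (LinearMap.range X.mulVecLin) with hV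
  have hXr : X.rank = Module.finrank ℂ V := (LinearEquiv.finrank_map_eq _ _).symm
  set b := stdOrthonormalBasis ℂ V with hb
  set n := Module.finrank ℂ ↥V with hn
  have hmem : ∀ s, toE (fun i => X i s) ∈ V := by
    intro s
    refine ⟨X.mulVecLin (Pi.single s 1), ⟨Pi.single s 1, rfl⟩, ?_⟩
    ext i
    show X.mulVecLin (Pi.single s 1) i = X i s
    rw [Matrix.mulVecLin_apply, Matrix.mulVec_single]
    simp
  set colv : J → V := fun s => ⟨toE (fun i => X i s), hmem s⟩ with hcolv
  refine ⟨n, fun t => (b t : EuclideanSpace ℂ I), fun t s => b.repr (colv s) t,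
    hXr.symm ▸ rfl, ?_, ?_, ?_⟩
  · intro t
    have h1 : ‖b t‖ = 1 := b.orthonormal.1 t
    have h2 : ‖toE ((b t : EuclideanSpace ℂ I) : I → ℂ)‖ = 1 := h1
    have := toE_norm_sq ((b t : EuclideanSpace ℂ I) : I → ℂ)
    rw [h2] at this
    simpa using this.symm
  · rw [Finset.sum_comm]
    refine Finset.sum_congr rfl fun s _ => ?_
    have h1 : ‖b.repr (colv s)‖ = ‖colv s‖ := by simp
    have h2 : ‖b.repr (colv s)‖ ^ 2 = ∑ t, Complex.normSq (b.repr (colv s) t) := by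
      rw [EuclideanSpace.norm_eq, Real.sq_sqrt (by positivity)]
      simp [Complex.sq_norm]
    have h3 : ‖colv s‖ ^ 2 = ∑ i, Complex.normSq (X i s) := by
      have : ‖colv s‖ = ‖toE (fun i => X i s)‖ := rfl
      rw [this, toE_norm_sq]
    rw [← h2, h1, h3]
  · intro i s
    have h := b.sum_repr (colv s)
    have h2 := congrArg (fun z : V => (z : EuclideanSpace ℂ I) i) h
    simp only at h2
    rw [show ((↑(∑ t, b.repr (colv s) t • b t) : EuclideanSpace ℂ I))
        = ∑ t, b.repr (colv s) t • (b t : EuclideanSpace ℂ I) by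
      exact_mod_cast rfl] at h2
    have h3 : (∑ t, b.repr (colv s) t • (b t : EuclideanSpace ℂ I)) i
        = ∑ t, b.repr (colv s) t * (b t : EuclideanSpace ℂ I) i := by
      simp [WithLp.ofLp_sum]
    rw [h3] at h2
    exact h2.symm

lemma sum_prod_mul {α β : Type*} [Fintype α] [Fintype β] (lam : ℝ) (A : α → ℝ) (B : β → ℝ) :
    ∑ r : α × β, lam * (A r.1 * B r.2) = lam * ((∑ a, A a) * (∑ b, B b)) := by
  rw [Finset.sum_mul_sum, Finset.mul_sum, Fintype.sum_prod_type]
  exact Finset.sum_congr rfl fun a _ => by rw [Finset.mul_sum]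

lemma term_bound {d : ℕ} (ψ : Fin d × Fin d → ℂ) (lam : ℝ) (hlam0 : 0 ≤ lam)
    (key : ∀ a b : Fin d → ℂ,
      Complex.normSq (∑ q : Fin d × Fin d, (starRingEnd ℂ) (ψ q) * (a q.1 * b q.2))
        ≤ lam * ((∑ i, Complex.normSq (a i)) * (∑ j, Complex.normSq (b j))))
    (χ : (Fin d × Fin d) × (Fin d × Fin d) → ℂ)
    (hχ2 : ∑ q, Complex.normSq (χ q) = 1)
    (n : ℕ) (hn : n ≤ 2)
    (u : Fin n → (Fin d × Fin d) → ℂ) (c : Fin n → (Fin d × Fin d) → ℂ)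
    (hu : ∀ t, ∑ q, Complex.normSq (u t q) = 1)
    (hc : ∑ t, ∑ s, Complex.normSq (c t s)
        = ∑ s : Fin d × Fin d, ∑ i : Fin d × Fin d,
            Complex.normSq ((Matrix.of fun a b : Fin d × Fin d =>
              χ ((a.1, b.1), (a.2, b.2))) i s))
    (hdecomp : ∀ i s, (Matrix.of fun a b : Fin d × Fin d =>
        χ ((a.1, b.1), (a.2, b.2))) i s = ∑ t, c t s * u t i) :
    (∑ r : Fin d × Fin d, Complex.normSq (∑ s, (starRingEnd ℂ) (ψ s) * χ (r, s)))
        + (∑ s : Fin d × Fin d, Complex.normSq (∑ r, (starRingEnd ℂ) (ψ r) * χ (r, s)))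
      ≤ 4 * lam := by
  classical
  set C : Fin n → ℝ := fun t => ∑ s, Complex.normSq (c t s) with hC
  have hχX : ∀ r s : Fin d × Fin d, χ (r, s) = ∑ t, c t (r.2, s.2) * u t (r.1, s.1) := by
    intro r s
    have := hdecomp (r.1, s.1) (r.2, s.2)
    simpa using this
  have hCsum : ∑ t, C t = 1 := by
    rw [hC, hc, ← hχ2]
    rw [Finset.sum_comm]
    rw [← Fintype.sum_prod_type']
    exact Fintype.sum_equiv (Equiv.prodProdProdComm (Fin d) (Fin d) (Fin d) (Fin d))
      _ _ (by rintro ⟨⟨a, b⟩, ⟨x, y⟩⟩; rfl)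
  have husum : ∀ t, ∑ i : Fin d, ∑ k : Fin d, Complex.normSq (u t (i, k)) = 1 := by
    intro t
    rw [← Fintype.sum_prod_type']
    exact hu t
  have hcsum2 : ∀ t, ∑ j : Fin d, ∑ l : Fin d, Complex.normSq (c t (j, l)) = C t := by
    intro t
    rw [← Fintype.sum_prod_type']
  -- Term 1
  have hT1 : ∑ r : Fin d × Fin d, Complex.normSq (∑ s, (starRingEnd ℂ) (ψ s) * χ (r, s))
      ≤ 2 * lam := by
    have hvrep : ∀ r : Fin d × Fin d, (∑ s, (starRingEnd ℂ) (ψ s) * χ (r, s))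
        = ∑ t, ∑ q : Fin d × Fin d,
            (starRingEnd ℂ) (ψ q) * ((fun k => u t (r.1, k)) q.1 * (fun l => c t (r.2, l)) q.2) := by
      intro r
      rw [Finset.sum_comm]
      refine Finset.sum_congr rfl fun s _ => ?_
      rw [hχX r s, Finset.mul_sum]
      refine Finset.sum_congr rfl fun t _ => ?_
      ring
    have hF : ∀ t, ∑ r : Fin d × Fin d, Complex.normSq (∑ q : Fin d × Fin d,
        (starRingEnd ℂ) (ψ q) * ((fun k => u t (r.1, k)) q.1 * (fun l => c t (r.2, l)) q.2))
        ≤ lam * C t := by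
      intro t
      calc ∑ r : Fin d × Fin d, Complex.normSq (∑ q : Fin d × Fin d,
            (starRingEnd ℂ) (ψ q) * ((fun k => u t (r.1, k)) q.1 * (fun l => c t (r.2, l)) q.2))
          ≤ ∑ r : Fin d × Fin d, lam * ((∑ k, Complex.normSq (u t (r.1, k)))
              * (∑ l, Complex.normSq (c t (r.2, l)))) :=
            Finset.sum_le_sum fun r _ => key (fun k => u t (r.1, k)) (fun l => c t (r.2, l))
        _ = lam * ((∑ i : Fin d, ∑ k, Complex.normSq (u t (i, k)))
              * (∑ j : Fin d, ∑ l, Complex.normSq (c t (j, l)))) := by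
            exact sum_prod_mul lam (fun i => ∑ k, Complex.normSq (u t (i, k)))
              (fun j => ∑ l, Complex.normSq (c t (j, l)))
        _ = lam * C t := by rw [husum t, hcsum2 t, one_mul]
    calc ∑ r : Fin d × Fin d, Complex.normSq (∑ s, (starRingEnd ℂ) (ψ s) * χ (r, s))
        = ∑ r : Fin d × Fin d, Complex.normSq (∑ t, ∑ q : Fin d × Fin d,
            (starRingEnd ℂ) (ψ q) * ((fun k => u t (r.1, k)) q.1 * (fun l => c t (r.2, l)) q.2)) :=
          Finset.sum_congr rfl fun r _ => by rw [hvrep r]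
      _ ≤ 2 * lam := block hlam0 hn _ C hF hCsum
  -- Term 2
  have hT2 : ∑ s : Fin d × Fin d, Complex.normSq (∑ r, (starRingEnd ℂ) (ψ r) * χ (r, s))
      ≤ 2 * lam := by
    have hwrep : ∀ s : Fin d × Fin d, (∑ r, (starRingEnd ℂ) (ψ r) * χ (r, s))
        = ∑ t, ∑ q : Fin d × Fin d,
            (starRingEnd ℂ) (ψ q) * ((fun i => u t (i, s.1)) q.1 * (fun j => c t (j, s.2)) q.2) := by
      intro s
      rw [Finset.sum_comm]
      refine Finset.sum_congr rfl fun r _ => ?_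
      rw [hχX r s, Finset.mul_sum]
      refine Finset.sum_congr rfl fun t _ => ?_
      ring
    have hF : ∀ t, ∑ s : Fin d × Fin d, Complex.normSq (∑ q : Fin d × Fin d,
        (starRingEnd ℂ) (ψ q) * ((fun i => u t (i, s.1)) q.1 * (fun j => c t (j, s.2)) q.2))
        ≤ lam * C t := by
      intro t
      calc ∑ s : Fin d × Fin d, Complex.normSq (∑ q : Fin d × Fin d,
            (starRingEnd ℂ) (ψ q) * ((fun i => u t (i, s.1)) q.1 * (fun j => c t (j, s.2)) q.2))
          ≤ ∑ s : Fin d × Fin d, lam * ((∑ i, Complex.normSq (u t (i, s.1)))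
              * (∑ j, Complex.normSq (c t (j, s.2)))) :=
            Finset.sum_le_sum fun s _ => key (fun i => u t (i, s.1)) (fun j => c t (j, s.2))
        _ = lam * ((∑ k : Fin d, ∑ i, Complex.normSq (u t (i, k)))
              * (∑ l : Fin d, ∑ j, Complex.normSq (c t (j, l)))) := by
            exact sum_prod_mul lam (fun k => ∑ i, Complex.normSq (u t (i, k)))
              (fun l => ∑ j, Complex.normSq (c t (j, l)))
        _ = lam * C t := by
            have h1 : (∑ k : Fin d, ∑ i : Fin d, Complex.normSq (u t (i, k)))
                = ∑ i : Fin d, ∑ k : Fin d, Complex.normSq (u t (i, k)) := Finset.sum_comm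
            have h2 : (∑ l : Fin d, ∑ j : Fin d, Complex.normSq (c t (j, l)))
                = ∑ j : Fin d, ∑ l : Fin d, Complex.normSq (c t (j, l)) := Finset.sum_comm
            rw [h1, h2, husum t, hcsum2 t, one_mul]
    calc ∑ s : Fin d × Fin d, Complex.normSq (∑ r, (starRingEnd ℂ) (ψ r) * χ (r, s))
        = ∑ s : Fin d × Fin d, Complex.normSq (∑ t, ∑ q : Fin d × Fin d,
            (starRingEnd ℂ) (ψ q) * ((fun i => u t (i, s.1)) q.1 * (fun j => c t (j, s.2)) q.2)) :=
          Finset.sum_congr rfl fun s _ => by rw [hwrep s]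
      _ ≤ 2 * lam := block hlam0 hn _ C hF hCsum
  linarith

lemma kron_quad {d : ℕ} (ψ : Fin d × Fin d → ℂ)
    (p : Matrix (Fin d × Fin d) (Fin d × Fin d) ℂ)
    (hp : p = Matrix.vecMulVec ψ (star ψ))
    (χ : (Fin d × Fin d) × (Fin d × Fin d) → ℂ) :
    (star χ ⬝ᵥ (((1 : Matrix (Fin d × Fin d) (Fin d × Fin d) ℂ) ⊗ₖ p
              + p ⊗ₖ (1 : Matrix (Fin d × Fin d) (Fin d × Fin d) ℂ)).mulVec χ)).re
      = (∑ r : Fin d × Fin d, Complex.normSq (∑ s, (starRingEnd ℂ) (ψ s) * χ (r, s)))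
        + (∑ s : Fin d × Fin d, Complex.normSq (∑ r, (starRingEnd ℂ) (ψ r) * χ (r, s))) := by
  classical
  set v : Fin d × Fin d → ℂ := fun r => ∑ s, (starRingEnd ℂ) (ψ s) * χ (r, s) with hv
  set w : Fin d × Fin d → ℂ := fun s => ∑ r, (starRingEnd ℂ) (ψ r) * χ (r, s) with hw
  have hmv1 : ((1 : Matrix (Fin d × Fin d) (Fin d × Fin d) ℂ) ⊗ₖ p).mulVec χ
      = fun q => ψ q.2 * v q.1 := by
    funext q
    obtain ⟨r, s⟩ := q
    simp only [Matrix.mulVec, dotProduct, Matrix.kroneckerMap_apply, hp,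
      Matrix.vecMulVec_apply, Pi.star_apply, RCLike.star_def, Matrix.one_apply]
    rw [Fintype.sum_prod_type]
    rw [Finset.sum_eq_single r]
    · rw [hv, Finset.mul_sum]
      refine Finset.sum_congr rfl fun s' _ => ?_
      simp only [if_pos rfl, eq_self_iff_true, if_true]
      ring
    · intro r' _ hr'; simp [Ne.symm hr']
    · intro h; exact absurd (Finset.mem_univ r) h
  have hmv2 : (p ⊗ₖ (1 : Matrix (Fin d × Fin d) (Fin d × Fin d) ℂ)).mulVec χ
      = fun q => ψ q.1 * w q.2 := by
    funext q
    obtain ⟨r, s⟩ := q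
    simp only [Matrix.mulVec, dotProduct, Matrix.kroneckerMap_apply, hp,
      Matrix.vecMulVec_apply, Pi.star_apply, RCLike.star_def, Matrix.one_apply]
    rw [Fintype.sum_prod_type, Finset.sum_comm]
    rw [Finset.sum_eq_single s]
    · rw [hw, Finset.mul_sum]
      refine Finset.sum_congr rfl fun r' _ => ?_
      simp only [if_pos rfl, eq_self_iff_true, if_true]
      ring
    · intro s' _ hs'; simp [Ne.symm hs']
    · intro h; exact absurd (Finset.mem_univ s) h
  have hdp1 : (star χ ⬝ᵥ fun q : (Fin d × Fin d) × (Fin d × Fin d) => ψ q.2 * v q.1)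
      = ∑ r : Fin d × Fin d, (starRingEnd ℂ) (v r) * v r := by
    simp only [dotProduct, Pi.star_apply, RCLike.star_def]
    rw [Fintype.sum_prod_type]
    refine Finset.sum_congr rfl fun r _ => ?_
    have hc : (starRingEnd ℂ) (v r) = ∑ s, ψ s * (starRingEnd ℂ) (χ (r, s)) := by
      rw [hv]; simp only [map_sum, map_mul, Complex.conj_conj]
    rw [hc, Finset.sum_mul]
    exact Finset.sum_congr rfl fun s _ => by ring
  have hdp2 : (star χ ⬝ᵥ fun q : (Fin d × Fin d) × (Fin d × Fin d) => ψ q.1 * w q.2)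
      = ∑ s : Fin d × Fin d, (starRingEnd ℂ) (w s) * w s := by
    simp only [dotProduct, Pi.star_apply, RCLike.star_def]
    rw [Fintype.sum_prod_type, Finset.sum_comm]
    refine Finset.sum_congr rfl fun s _ => ?_
    have hc : (starRingEnd ℂ) (w s) = ∑ r, ψ r * (starRingEnd ℂ) (χ (r, s)) := by
      rw [hw]; simp only [map_sum, map_mul, Complex.conj_conj]
    rw [hc, Finset.sum_mul]
    exact Finset.sum_congr rfl fun r _ => by ring
  rw [Matrix.add_mulVec, dotProduct_add, hmv1, hmv2, hdp1, hdp2, Complex.add_re]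
  congr 1
  · rw [Complex.re_sum]
    exact Finset.sum_congr rfl fun r _ => by rw [mul_comm, Complex.mul_conj, Complex.ofReal_re]
  · rw [Complex.re_sum]
    exact Finset.sum_congr rfl fun s _ => by rw [mul_comm, Complex.mul_conj, Complex.ofReal_re]

/-- For a unit vector `ψ ∈ ℂ^d ⊗ ℂ^d` with `p = |ψ⟩⟨ψ|`, the Schmidt-2 operator norm bound
`‖1 ⊗ p + p ⊗ 1‖_{S(2)} ≤ 4 ‖p‖_{S(1)}`.  Here `‖A‖_{S(k)}` is the supremum of `⟨χ, A χ⟩`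
over unit vectors `χ` of Schmidt rank `≤ k`, the Schmidt rank being taken with respect to
the bipartition grouping the first tensor factors together and the second ones together. -/
theorem schmidt_two_opNorm_le {d : ℕ} (ψ : Fin d × Fin d → ℂ)
    (hψ : ∑ q : Fin d × Fin d, ‖ψ q‖ ^ 2 = 1)
    (p : Matrix (Fin d × Fin d) (Fin d × Fin d) ℂ)
    (hp : p = Matrix.vecMulVec ψ (star ψ)) :
    sSup {x : ℝ | ∃ χ : (Fin d × Fin d) × (Fin d × Fin d) → ℂ,
        (∑ q, ‖χ q‖ ^ 2 = 1) ∧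
        (Matrix.of fun a b : Fin d × Fin d => χ ((a.1, b.1), (a.2, b.2))).rank ≤ 2 ∧
        x = (star χ ⬝ᵥ (((1 : Matrix (Fin d × Fin d) (Fin d × Fin d) ℂ) ⊗ₖ p
              + p ⊗ₖ (1 : Matrix (Fin d × Fin d) (Fin d × Fin d) ℂ)).mulVec χ)).re}
      ≤ 4 * sSup {x : ℝ | ∃ η : Fin d × Fin d → ℂ,
        (∑ q, ‖η q‖ ^ 2 = 1) ∧
        (Matrix.of fun i j : Fin d => η (i, j)).rank ≤ 1 ∧
        x = (star η ⬝ᵥ (p.mulVec η)).re} := by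
  classical
  have hψ2 : ∑ q, Complex.normSq (ψ q) = 1 := by simpa [Complex.sq_norm] using hψ
  have hd : 0 < d := by
    rcases Nat.eq_zero_or_pos d with h | h
    · subst h; simp at hψ
    · exact h
  have quad : ∀ η : Fin d × Fin d → ℂ,
      (star η ⬝ᵥ (p.mulVec η)).re
        = Complex.normSq (∑ q, (starRingEnd ℂ) (ψ q) * η q) := by
    intro η
    have h1 : p.mulVec η = fun i => ψ i * (∑ q, (starRingEnd ℂ) (ψ q) * η q) := by
      funext i
      simp only [hp, Matrix.mulVec, dotProduct, Matrix.vecMulVec_apply, Pi.star_apply]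
      rw [Finset.mul_sum]
      refine Finset.sum_congr rfl fun q _ => ?_
      simp [RCLike.star_def]
      ring
    rw [h1]
    have h2 : (star η ⬝ᵥ fun i => ψ i * (∑ q, (starRingEnd ℂ) (ψ q) * η q))
        = (starRingEnd ℂ) (∑ q, (starRingEnd ℂ) (ψ q) * η q)
          * (∑ q, (starRingEnd ℂ) (ψ q) * η q) := by
      simp only [dotProduct, Pi.star_apply, RCLike.star_def, map_sum, map_mul,
        RingHomCompTriple.comp_apply, RingHom.id_apply, Complex.conj_conj]
      rw [Finset.sum_mul]
      refine Finset.sum_congr rfl fun q _ => ?_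
      ring
    rw [h2, mul_comm, Complex.mul_conj]
    exact Complex.ofReal_re _
  set S1 : Set ℝ := {x : ℝ | ∃ η : Fin d × Fin d → ℂ,
        (∑ q, ‖η q‖ ^ 2 = 1) ∧
        (Matrix.of fun i j : Fin d => η (i, j)).rank ≤ 1 ∧
        x = (star η ⬝ᵥ (p.mulVec η)).re} with hS1
  have hS1bdd : BddAbove S1 := by
    refine ⟨1, ?_⟩
    rintro x ⟨η, hη, -, rfl⟩
    rw [quad η]
    calc Complex.normSq (∑ q, (starRingEnd ℂ) (ψ q) * η q)
        ≤ (∑ q, Complex.normSq (ψ q)) * (∑ q, Complex.normSq (η q)) :=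
          cauchy_schwarz_sum ψ η
      _ = 1 := by
          rw [hψ2, one_mul]
          simpa [Complex.sq_norm] using hη
  set lam : ℝ := sSup S1 with hlam
  have hlam0 : 0 ≤ lam := by
    set q0 : Fin d × Fin d := (⟨0, hd⟩, ⟨0, hd⟩) with hq0
    set η0 : Fin d × Fin d → ℂ := Pi.single q0 1 with hη0
    have hnorm : ∑ q, ‖η0 q‖ ^ 2 = 1 := by
      rw [hη0]
      rw [Finset.sum_eq_single q0]
      · simp
      · intro b _ hb; simp [Pi.single_apply, hb]
      · intro h; exact absurd (Finset.mem_univ q0) h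
    have hrk : (Matrix.of fun i j : Fin d => η0 (i, j)).rank ≤ 1 := by
      have heq : (Matrix.of fun i j : Fin d => η0 (i, j))
          = Matrix.vecMulVec (Pi.single q0.1 (1:ℂ)) (Pi.single q0.2 1) := by
        ext i j
        simp only [Matrix.of_apply, Matrix.vecMulVec_apply, hη0, Pi.single_apply, Prod.ext_iff]
        by_cases h1 : i = q0.1 <;> by_cases h2 : j = q0.2 <;> simp [h1, h2]
      rw [heq]
      exact rank_vecMulVec_le' _ _
    have hmem : (star η0 ⬝ᵥ (p.mulVec η0)).re ∈ S1 := ⟨η0, hnorm, hrk, rfl⟩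
    have h1 := le_csSup hS1bdd hmem
    have h2 : 0 ≤ (star η0 ⬝ᵥ (p.mulVec η0)).re := by
      rw [quad]; exact Complex.normSq_nonneg _
    linarith
  have key : ∀ a b : Fin d → ℂ,
      Complex.normSq (∑ q : Fin d × Fin d, (starRingEnd ℂ) (ψ q) * (a q.1 * b q.2))
        ≤ lam * ((∑ i, Complex.normSq (a i)) * (∑ j, Complex.normSq (b j))) := by
    intro a b
    set A := ∑ i, Complex.normSq (a i) with hA
    set B := ∑ j, Complex.normSq (b j) with hB
    have hA0 : 0 ≤ A := Finset.sum_nonneg fun _ _ => Complex.normSq_nonneg _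
    have hB0 : 0 ≤ B := Finset.sum_nonneg fun _ _ => Complex.normSq_nonneg _
    have hzero : ∀ f : Fin d → ℂ, (∑ i, Complex.normSq (f i)) = 0 → ∀ i, f i = 0 := by
      intro f hf i
      have := (Finset.sum_eq_zero_iff_of_nonneg
        (fun j _ => Complex.normSq_nonneg (f j))).1 hf i (Finset.mem_univ i)
      exact Complex.normSq_eq_zero.1 this
    rcases eq_or_lt_of_le hA0 with hA' | hA'
    · have : ∀ q : Fin d × Fin d, (starRingEnd ℂ) (ψ q) * (a q.1 * b q.2) = 0 := by
        intro q; rw [hzero a hA'.symm q.1]; ring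
      rw [Finset.sum_congr rfl fun q _ => this q]
      simp [← hA', hlam0]
    rcases eq_or_lt_of_le hB0 with hB' | hB'
    · have : ∀ q : Fin d × Fin d, (starRingEnd ℂ) (ψ q) * (a q.1 * b q.2) = 0 := by
        intro q; rw [hzero b hB'.symm q.2]; ring
      rw [Finset.sum_congr rfl fun q _ => this q]
      simp [← hB', hlam0]
    -- now A, B > 0
    set cst : ℝ := Real.sqrt (A * B) with hcst
    have hcpos : 0 < cst := Real.sqrt_pos.2 (mul_pos hA' hB')
    have hcsq : cst ^ 2 = A * B := Real.sq_sqrt (le_of_lt (mul_pos hA' hB'))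
    set η : Fin d × Fin d → ℂ := fun q => (cst : ℂ)⁻¹ * (a q.1 * b q.2) with hη
    have hprod : ∑ q : Fin d × Fin d, Complex.normSq (a q.1 * b q.2) = A * B := by
      rw [Fintype.sum_prod_type]
      simp_rw [Complex.normSq_mul]
      rw [← Finset.sum_mul_sum]
    have hηsq : ∀ q, Complex.normSq (η q) = (A * B)⁻¹ * Complex.normSq (a q.1 * b q.2) := by
      intro q
      rw [hη]
      simp only [Complex.normSq_mul, Complex.normSq_inv, Complex.normSq_ofReal]
      rw [← hcsq]
      ring
    have hηnorm : ∑ q, ‖η q‖ ^ 2 = 1 := by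
      simp_rw [Complex.sq_norm, hηsq, ← Finset.mul_sum, hprod]
      field_simp
    have hrk : (Matrix.of fun i j : Fin d => η (i, j)).rank ≤ 1 := by
      have : (Matrix.of fun i j : Fin d => η (i, j))
          = Matrix.vecMulVec (fun i => (cst : ℂ)⁻¹ * a i) b := by
        ext i j
        simp only [Matrix.of_apply, Matrix.vecMulVec_apply, hη]
        ring
      rw [this]; exact rank_vecMulVec_le' _ _
    have hmem : (star η ⬝ᵥ (p.mulVec η)).re ∈ S1 := by
      rw [hS1]; exact ⟨η, hηnorm, hrk, rfl⟩
    have hle : (star η ⬝ᵥ (p.mulVec η)).re ≤ lam := hlam ▸ le_csSup hS1bdd hmem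
    rw [quad η] at hle
    have hval : Complex.normSq (∑ q, (starRingEnd ℂ) (ψ q) * η q)
        = (A * B)⁻¹ * Complex.normSq (∑ q : Fin d × Fin d,
            (starRingEnd ℂ) (ψ q) * (a q.1 * b q.2)) := by
      have : ∑ q, (starRingEnd ℂ) (ψ q) * η q
          = (cst : ℂ)⁻¹ * ∑ q : Fin d × Fin d, (starRingEnd ℂ) (ψ q) * (a q.1 * b q.2) := by
        rw [Finset.mul_sum]
        refine Finset.sum_congr rfl fun q _ => ?_
        rw [hη]; ring
      rw [this, Complex.normSq_mul, Complex.normSq_inv, Complex.normSq_ofReal]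
      rw [← hcsq]
      ring
    rw [hval] at hle
    have hABpos : 0 < A * B := mul_pos hA' hB'
    calc Complex.normSq (∑ q : Fin d × Fin d, (starRingEnd ℂ) (ψ q) * (a q.1 * b q.2))
        = (A * B) * ((A * B)⁻¹ * Complex.normSq (∑ q : Fin d × Fin d,
            (starRingEnd ℂ) (ψ q) * (a q.1 * b q.2))) := by
          field_simp
      _ ≤ (A * B) * lam := by
          exact mul_le_mul_of_nonneg_left hle (le_of_lt hABpos)
      _ = lam * (A * B) := by ring
  refine Real.sSup_le ?_ (by linarith)
  rintro x ⟨χ, hχ, hrank, rfl⟩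
  rw [kron_quad ψ p hp χ]
  obtain ⟨n, u, c, hn, hu, hc, hdecomp⟩ :=
    decomp (Matrix.of fun a b : Fin d × Fin d => χ ((a.1, b.1), (a.2, b.2)))
  have hn2 : n ≤ 2 := hn ▸ hrank
  have hχ2 : ∑ q, Complex.normSq (χ q) = 1 := by simpa [Complex.sq_norm] using hχ
  exact term_bound ψ lam hlam0 key χ hχ2 n hn2 u c hu hc hdecomp
end
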